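/- arXiv:2505.10178 — 5 statements merged into one kernel-verified Lean document; each statement's English description precedes it below -/
import Mathlib

section
/- Let A₁, A₂ be real s×s matrices all of whose entries are integers. Then the joint spectral radius of the pair is never strictly between 0 and 1: either JSR(A₁, A₂) = 0 or JSR(A₁, A₂) ≥ 1. -/
open Matrix

/-- Operator norm on real s×s matrices induced by the Euclidean norm. -/
noncomputable def l2OpNorm {s : ℕ} (A : Matrix (Fin s) (Fin s) ℝ) : ℝ :=
  ‖Matrix.toEuclideanCLM (𝕜 := ℝ) A‖

/-- Spectral radius of a real matrix viewed as a complex matrix. -/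
noncomputable def specRad {s : ℕ} (A : Matrix (Fin s) (Fin s) ℝ) : ℝ :=
  (spectralRadius ℂ (A.map (Complex.ofReal : ℝ → ℂ))).toReal

/-- The ordered product `A (w (n-1)) * ⋯ * A (w 0)`. -/
noncomputable def wordProd {s J n : ℕ} (A : Fin J → Matrix (Fin s) (Fin s) ℝ)
    (w : Fin n → Fin J) : Matrix (Fin s) (Fin s) ℝ :=
  ((List.ofFn fun i => A (w i)).reverse).prod

/-- Joint spectral radius of a finite family of real s×s matrices. -/
noncomputable def JSR {s J : ℕ} (A : Fin J → Matrix (Fin s) (Fin s) ℝ) : ℝ :=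
  ⨅ n : {m : ℕ // 1 ≤ m}, ⨆ w : Fin (n : ℕ) → Fin J,
    l2OpNorm (wordProd A w) ^ (1 / ((n : ℕ) : ℝ))

/-- The pair has the finiteness property. -/
def FinitenessProperty {s : ℕ} (A : Fin 2 → Matrix (Fin s) (Fin s) ℝ) : Prop :=
  ∃ n : ℕ, 1 ≤ n ∧ ∃ w : Fin n → Fin 2,
    specRad (wordProd A w) ^ (1 / (n : ℝ)) = JSR A

/-- Entries are bounded by the l2 operator norm. -/
lemma entry_le_l2OpNorm {s : ℕ} (A : Matrix (Fin s) (Fin s) ℝ) (i j : Fin s) :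
    |A i j| ≤ l2OpNorm A := by
  have hv : (Matrix.toEuclideanCLM (𝕜 := ℝ) A) (EuclideanSpace.single j 1) =
      (WithLp.equiv 2 (Fin s → ℝ)).symm (A.mulVec (Pi.single j 1)) :=
    Matrix.toEuclideanCLM_toLp (𝕜 := ℝ) A (Pi.single j 1)
  have hmv : A.mulVec (Pi.single j (1:ℝ)) = fun i => A i j := by
    rw [Matrix.mulVec_single]; simp; rfl
  have hij : A i j =
      inner ℝ (EuclideanSpace.single i (1:ℝ))
        ((Matrix.toEuclideanCLM (𝕜 := ℝ) A) (EuclideanSpace.single j 1)) := by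
    rw [hv, EuclideanSpace.inner_single_left, hmv]
    simp only [_root_.map_one, one_mul]; rfl
  have h1 : ‖(EuclideanSpace.single i (1:ℝ))‖ = 1 := by
    rw [EuclideanSpace.norm_single]; simp
  have h2 : ‖(EuclideanSpace.single j (1:ℝ))‖ = 1 := by
    rw [EuclideanSpace.norm_single]; simp
  calc |A i j| = ‖(inner ℝ (EuclideanSpace.single i (1:ℝ))
        ((Matrix.toEuclideanCLM (𝕜 := ℝ) A) (EuclideanSpace.single j 1)) : ℝ)‖ := by
        rw [← hij]; rw [Real.norm_eq_abs]
    _ ≤ ‖(EuclideanSpace.single i (1:ℝ))‖ *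
        ‖(Matrix.toEuclideanCLM (𝕜 := ℝ) A) (EuclideanSpace.single j 1)‖ :=
        norm_inner_le_norm _ _
    _ ≤ 1 * (‖Matrix.toEuclideanCLM (𝕜 := ℝ) A‖ * ‖(EuclideanSpace.single j (1:ℝ))‖) := by
        rw [h1]; gcongr; exact ContinuousLinearMap.le_opNorm _ _
    _ = l2OpNorm A := by rw [h2, l2OpNorm]; ring

/-- A real matrix has integer entries. -/
def IsIntM {s : ℕ} (M : Matrix (Fin s) (Fin s) ℝ) : Prop :=
  ∀ i j, ∃ k : ℤ, M i j = k

lemma isIntM_one {s : ℕ} : IsIntM (1 : Matrix (Fin s) (Fin s) ℝ) := by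
  intro i j
  by_cases h : i = j
  · exact ⟨1, by simp [h, Matrix.one_apply]⟩
  · exact ⟨0, by simp [h, Matrix.one_apply]⟩

lemma isIntM_mul {s : ℕ} {M N : Matrix (Fin s) (Fin s) ℝ}
    (hM : IsIntM M) (hN : IsIntM N) : IsIntM (M * N) := by
  intro i j
  choose m hm using hM
  choose n hn using hN
  refine ⟨∑ x, m i x * n x j, ?_⟩
  rw [Matrix.mul_apply]
  push_cast
  exact Finset.sum_congr rfl fun x _ => by rw [hm, hn]

lemma isIntM_listProd {s : ℕ} (l : List (Matrix (Fin s) (Fin s) ℝ))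
    (h : ∀ M ∈ l, IsIntM M) : IsIntM l.prod := by
  induction l with
  | nil => simpa using isIntM_one
  | cons a t ih =>
    rw [List.prod_cons]
    exact isIntM_mul (h a (List.mem_cons_self))
      (ih fun M hM => h M (List.mem_cons_of_mem a hM))

/-- The JSR of a pair of integer matrices is never strictly between 0 and 1. -/
theorem jsr_int_not_between_zero_and_one {s : ℕ}
    (A₁ A₂ : Matrix (Fin s) (Fin s) ℝ)
    (h₁ : ∀ i j, ∃ k : ℤ, A₁ i j = k)
    (h₂ : ∀ i j, ∃ k : ℤ, A₂ i j = k) :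
    JSR ![A₁, A₂] = 0 ∨ 1 ≤ JSR ![A₁, A₂] := by
  by_cases hge : 1 ≤ JSR ![A₁, A₂]
  · exact Or.inr hge
  left
  push_neg at hge
  set A : Fin 2 → Matrix (Fin s) (Fin s) ℝ := ![A₁, A₂] with hA
  -- integer entries of all word products
  have hint : ∀ {n : ℕ} (w : Fin n → Fin 2), IsIntM (wordProd A w) := by
    intro n w
    apply isIntM_listProd
    intro M hM
    rw [List.mem_reverse, List.mem_ofFn] at hM
    obtain ⟨i, rfl⟩ := hM
    have hw : w i = 0 ∨ w i = 1 := by omega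
    show IsIntM (A (w i))
    rcases hw with hw | hw <;> rw [hw]
    · simpa [IsIntM, hA] using h₁
    · simpa [IsIntM, hA] using h₂
  set g : {m : ℕ // 1 ≤ m} → ℝ := fun n =>
    ⨆ w : Fin (n : ℕ) → Fin 2, l2OpNorm (wordProd A w) ^ (1 / ((n : ℕ) : ℝ)) with hg
  have hterm_nonneg : ∀ (n : {m : ℕ // 1 ≤ m}) (w : Fin (n : ℕ) → Fin 2),
      (0:ℝ) ≤ l2OpNorm (wordProd A w) ^ (1 / ((n : ℕ) : ℝ)) := fun n w =>
    Real.rpow_nonneg (norm_nonneg _) _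
  have hg_nonneg : ∀ n, 0 ≤ g n := fun n =>
    Real.iSup_nonneg (hterm_nonneg n)
  have hJg : JSR A = ⨅ n, g n := rfl
  have hbdd : BddBelow (Set.range g) := ⟨0, by rintro x ⟨n, rfl⟩; exact hg_nonneg n⟩
  have hJnonneg : 0 ≤ JSR A := by
    rw [hJg]
    exact le_ciInf hg_nonneg
  -- find n₀ with g n₀ < 1
  have hlt : ⨅ n, g n < 1 := by rw [← hJg]; exact hge
  obtain ⟨n₀, hn₀⟩ := exists_lt_of_ciInf_lt hlt
  have hnpos : (0:ℝ) < (n₀ : ℕ) := by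
    exact_mod_cast lt_of_lt_of_le Nat.zero_lt_one n₀.2
  have hexp_pos : (0:ℝ) < 1 / ((n₀ : ℕ) : ℝ) := by positivity
  -- every word product of length n₀ is zero
  have hzero : ∀ w : Fin (n₀ : ℕ) → Fin 2, wordProd A w = 0 := by
    intro w
    have hle : l2OpNorm (wordProd A w) ^ (1 / ((n₀ : ℕ) : ℝ)) ≤ g n₀ :=
      le_ciSup (f := fun w : Fin (n₀ : ℕ) → Fin 2 =>
        l2OpNorm (wordProd A w) ^ (1 / ((n₀ : ℕ) : ℝ)))
        (Set.Finite.bddAbove (Set.finite_range _)) w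
    have hlt1 : l2OpNorm (wordProd A w) ^ (1 / ((n₀ : ℕ) : ℝ)) < 1 := lt_of_le_of_lt hle hn₀
    have hnorm_lt : l2OpNorm (wordProd A w) < 1 := by
      by_contra hcon
      push_neg at hcon
      have : (1:ℝ) ≤ l2OpNorm (wordProd A w) ^ (1 / ((n₀ : ℕ) : ℝ)) := by
        calc (1:ℝ) = (1:ℝ) ^ (1 / ((n₀ : ℕ) : ℝ)) := (Real.one_rpow _).symm
          _ ≤ _ := Real.rpow_le_rpow (by norm_num) hcon (le_of_lt hexp_pos)
      linarith
    ext i j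
    obtain ⟨k, hk⟩ := hint w i j
    have habs : |(k : ℝ)| < 1 := by
      rw [← hk]
      exact lt_of_le_of_lt (entry_le_l2OpNorm _ i j) hnorm_lt
    have hk0 : k = 0 := by
      have h' : |k| < 1 := by exact_mod_cast habs
      rw [abs_lt] at h'
      omega
    simp [hk, hk0]
  -- hence g n₀ = 0
  have hg0 : g n₀ = 0 := by
    apply le_antisymm _ (hg_nonneg n₀)
    apply Real.iSup_le _ le_rfl
    intro w
    rw [hzero w]
    have : l2OpNorm (0 : Matrix (Fin s) (Fin s) ℝ) = 0 := by
      rw [l2OpNorm, map_zero, norm_zero]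
    rw [this, Real.zero_rpow (ne_of_gt hexp_pos)]
  have hle0 : JSR A ≤ 0 := by
    rw [hJg, ← hg0]
    exact ciInf_le hbdd n₀
  exact le_antisymm hle0 hJnonneg
end

section
/- Let A₁, A₂ be real s×s matrices all of whose entries are nonnegative integers. If JSR(A₁, A₂) ≤ 1, then the pair (A₁, A₂) has the finiteness property. -/
open Matrix

open scoped ENNReal NNReal

section NormLemmas
variable {𝕜 : Type*} [RCLike 𝕜] {s : ℕ}

lemma comp_le_norm (y : EuclideanSpace 𝕜 (Fin s)) (i : Fin s) : ‖y i‖ ≤ ‖y‖ := by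
  rw [EuclideanSpace.norm_eq]
  rw [show ‖y i‖ = Real.sqrt (‖y i‖ ^ 2) by rw [Real.sqrt_sq (norm_nonneg _)]]
  apply Real.sqrt_le_sqrt
  exact Finset.single_le_sum (f := fun k => ‖y k‖ ^ 2) (fun k _ => sq_nonneg _) (Finset.mem_univ i)

lemma entry_le_opNorm (M : Matrix (Fin s) (Fin s) 𝕜) (i j : Fin s) :
    ‖M i j‖ ≤ ‖toEuclideanCLM (𝕜 := 𝕜) M‖ := by
  classical
  set x : EuclideanSpace 𝕜 (Fin s) := EuclideanSpace.single j 1 with hx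
  have hxval : toEuclideanCLM (𝕜 := 𝕜) M x = (WithLp.equiv _ _).symm (M *ᵥ Pi.single j 1) := by
    rw [hx]
    rw [show (EuclideanSpace.single j (1:𝕜)) = (WithLp.equiv 2 _).symm (Pi.single j 1) from rfl]
    rfl
  have h1 : ‖M i j‖ = ‖(toEuclideanCLM (𝕜 := 𝕜) M x) i‖ := by
    rw [hxval]
    simp [Matrix.mulVec_single]
  rw [h1]
  calc ‖(toEuclideanCLM (𝕜 := 𝕜) M x) i‖ ≤ ‖toEuclideanCLM (𝕜 := 𝕜) M x‖ := comp_le_norm _ _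
    _ ≤ ‖toEuclideanCLM (𝕜 := 𝕜) M‖ * ‖x‖ := ContinuousLinearMap.le_opNorm _ _
    _ = ‖toEuclideanCLM (𝕜 := 𝕜) M‖ := by
        rw [hx, EuclideanSpace.norm_single, norm_one, mul_one]

lemma opNorm_stdBasis_le (i j : Fin s) (c : 𝕜) :
    ‖toEuclideanCLM (𝕜 := 𝕜) (Matrix.single i j c)‖ ≤ ‖c‖ := by
  classical
  refine ContinuousLinearMap.opNorm_le_bound _ (norm_nonneg _) fun x => ?_
  have hxe : x = (WithLp.equiv 2 _).symm (WithLp.equiv 2 _ x) := rfl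
  rw [hxe]
  change ‖(WithLp.equiv 2 _).symm (Matrix.toLin' (Matrix.single i j c) (WithLp.equiv 2 _ x))‖ ≤ ‖c‖ * ‖(WithLp.equiv 2 (Fin s → 𝕜)).symm (WithLp.equiv 2 _ x)‖
  set v := WithLp.equiv 2 _ x
  have hmv : Matrix.toLin' (Matrix.single i j c) v = Pi.single i (c * v j) := by
    rw [Matrix.toLin'_apply]
    ext k
    simp [Matrix.mulVec, dotProduct, Matrix.single_apply, Pi.single_apply]
    rcases eq_or_ne k i with rfl | hk
    · simp
    · simp [hk, Ne.symm hk]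
  rw [hmv]
  have h2 : ‖(WithLp.equiv 2 (Fin s → 𝕜)).symm (Pi.single i (c * v j))‖ = ‖c * v j‖ := by
    rw [show (WithLp.equiv 2 (Fin s → 𝕜)).symm (Pi.single i (c * v j)) =
      EuclideanSpace.single i (c * v j) from rfl, EuclideanSpace.norm_single]
  rw [h2, norm_mul]
  exact mul_le_mul_of_nonneg_left ((comp_le_norm x j)) (norm_nonneg _)

lemma opNorm_le_sum_entries (M : Matrix (Fin s) (Fin s) 𝕜) :
    ‖toEuclideanCLM (𝕜 := 𝕜) M‖ ≤ ∑ i : Fin s, ∑ j : Fin s, ‖M i j‖ := by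
  classical
  nth_rewrite 1 [Matrix.matrix_eq_sum_single M]
  rw [map_sum]
  refine (norm_sum_le _ _).trans (Finset.sum_le_sum fun i _ => ?_)
  rw [map_sum]
  exact (norm_sum_le _ _).trans (Finset.sum_le_sum fun j _ => opNorm_stdBasis_le i j (M i j))

end NormLemmas


namespace JSRaux
variable {s J : ℕ} (A : Fin J → Matrix (Fin s) (Fin s) ℝ)

/-- Product of the matrices along a list, head applied first (leftmost factor). -/
noncomputable def mats (l : List (Fin J)) : Matrix (Fin s) (Fin s) ℝ :=
  (l.map A).prod

@[simp] lemma mats_nil : mats A ([] : List (Fin J)) = 1 := rfl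

@[simp] lemma mats_cons (a : Fin J) (l : List (Fin J)) :
    mats A (a :: l) = A a * mats A l := by
  simp [mats]

lemma mats_append (l₁ l₂ : List (Fin J)) :
    mats A (l₁ ++ l₂) = mats A l₁ * mats A l₂ := by
  simp [mats]

lemma wordProd_eq_mats {n : ℕ} (w : Fin n → Fin J) :
    wordProd A w = mats A ((List.ofFn w).reverse) := by
  unfold wordProd mats
  rw [show (List.ofFn fun i => A (w i)) = (List.ofFn w).map A by
    rw [List.map_ofFn]; rfl]
  rw [List.map_reverse]

lemma exists_word_eq_mats (l : List (Fin J)) :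
    ∃ w : Fin l.length → Fin J, wordProd A w = mats A l := by
  refine ⟨fun i => l.reverse.get (Fin.cast l.length_reverse.symm i), ?_⟩
  rw [wordProd_eq_mats]
  have hX : (List.ofFn fun i => l.reverse.get (Fin.cast l.length_reverse.symm i)) = l.reverse := by
    apply List.ext_getElem
    · simp
    · intro i h1 h2
      simp [List.getElem_ofFn]
  rw [hX, List.reverse_reverse]


/-- All entries are natural numbers. -/
def NatMat (M : Matrix (Fin s) (Fin s) ℝ) : Prop := ∀ i j, ∃ k : ℕ, M i j = k

lemma NatMat.one : NatMat (1 : Matrix (Fin s) (Fin s) ℝ) := by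
  intro i j
  rcases eq_or_ne i j with rfl | h
  · exact ⟨1, by simp⟩
  · exact ⟨0, by simp [Matrix.one_apply_ne h]⟩

lemma NatMat.mul {M N : Matrix (Fin s) (Fin s) ℝ} (hM : NatMat M) (hN : NatMat N) :
    NatMat (M * N) := by
  intro i j
  choose b hb using hM
  choose c hc using hN
  refine ⟨∑ k, b i k * c k j, ?_⟩
  rw [Matrix.mul_apply]
  push_cast
  exact Finset.sum_congr rfl fun k _ => by rw [hb, hc]

lemma NatMat.nonneg {M : Matrix (Fin s) (Fin s) ℝ} (hM : NatMat M) (i j : Fin s) :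
    0 ≤ M i j := by
  obtain ⟨k, hk⟩ := hM i j
  rw [hk]; positivity

lemma NatMat.one_le {M : Matrix (Fin s) (Fin s) ℝ} (hM : NatMat M) {i j : Fin s}
    (h : M i j ≠ 0) : 1 ≤ M i j := by
  obtain ⟨k, hk⟩ := hM i j
  rw [hk] at h ⊢
  have : k ≠ 0 := by exact_mod_cast h
  exact_mod_cast Nat.one_le_iff_ne_zero.mpr this

lemma NatMat.pow {M : Matrix (Fin s) (Fin s) ℝ} (hM : NatMat M) (k : ℕ) : NatMat (M ^ k) := by
  induction k with
  | zero => simpa [pow_zero] using NatMat.one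
  | succ k ih => rw [pow_succ]; exact ih.mul hM


section Paths
variable {s : ℕ} (A : Fin 2 → Matrix (Fin s) (Fin s) ℝ)

lemma natMat_mats (hA : ∀ t, NatMat (A t)) (l : List (Fin 2)) : NatMat (mats A l) := by
  induction l with
  | nil => exact NatMat.one
  | cons b m ihm => rw [mats_cons]; exact (hA b).mul ihm

lemma path_of_ne_zero (hA : ∀ t, NatMat (A t)) :
    ∀ (l : List (Fin 2)) (i j : Fin s), (mats A l) i j ≠ 0 →
    ∃ f : Fin (l.length + 1) → Fin s, f 0 = i ∧ f (Fin.last _) = j ∧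
      ∀ k : Fin l.length, (A (l.get k)) (f k.castSucc) (f k.succ) ≠ 0 := by
  intro l
  induction l with
  | nil =>
    intro i j h
    simp only [mats_nil] at h
    have hij : i = j := by
      by_contra hne
      rw [Matrix.one_apply_ne hne] at h
      exact h rfl
    exact ⟨fun _ => i, rfl, hij, fun k => k.elim0⟩
  | cons a l ih =>
    intro i j h
    rw [mats_cons, Matrix.mul_apply] at h
    obtain ⟨m, -, hm⟩ := Finset.exists_ne_zero_of_sum_ne_zero h
    have h1 : (A a) i m ≠ 0 := fun hz => hm (by rw [hz, zero_mul])
    have h2 : (mats A l) m j ≠ 0 := fun hz => hm (by rw [hz, mul_zero])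
    obtain ⟨f', hf0, hfl, hfs⟩ := ih m j h2
    refine ⟨Fin.cons i f', Fin.cons_zero _ _, ?_, ?_⟩
    · simp only [List.length_cons]
      rw [show (Fin.last (l.length + 1)) = Fin.succ (Fin.last l.length) from rfl,
        Fin.cons_succ]
      exact hfl
    · intro k
      refine Fin.cases ?_ ?_ k
      · simpa [Fin.cons_zero, Fin.cons_succ] using (hf0 ▸ h1)
      · intro t
        have e1 : (Fin.succ t).castSucc = Fin.succ t.castSucc := by
          rw [Fin.succ_castSucc]
        simp only [List.length_cons]
        rw [e1, Fin.cons_succ, Fin.cons_succ]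
        exact hfs t

lemma one_le_of_path (hA : ∀ t, NatMat (A t)) :
    ∀ (l : List (Fin 2)) (f : Fin (l.length + 1) → Fin s),
    (∀ k : Fin l.length, (A (l.get k)) (f k.castSucc) (f k.succ) ≠ 0) →
    1 ≤ (mats A l) (f 0) (f (Fin.last _)) := by
  intro l
  induction l with
  | nil =>
    intro f _
    have h0 : f (Fin.last [].length) = f 0 := congrArg f rfl
    rw [mats_nil, h0, Matrix.one_apply_eq]
  | cons a l ih =>
    intro f hf
    have hNl : NatMat (mats A l) := natMat_mats A hA l
    rw [mats_cons, Matrix.mul_apply]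
    have hstep0 := hf (0 : Fin (l.length + 1))
    have h1 : 1 ≤ (A a) (f 0) (f 1) := by
      refine (hA a).one_le ?_
      simpa using hstep0
    have h2 : 1 ≤ (mats A l) (f 1) (f (Fin.last _)) := by
      have := ih (fun k => f k.succ) (fun k => by
        have e1 : (Fin.succ k.castSucc) = (Fin.succ k).castSucc := by
          rw [Fin.succ_castSucc]
        have hstep := hf k.succ
        show A (l.get k) (f k.castSucc.succ) (f k.succ.succ) ≠ 0
        rw [e1]
        exact hstep)
      simpa [Fin.succ_last] using this
    calc (1:ℝ) = 1 * 1 := by ring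
      _ ≤ (A a) (f 0) (f 1) * (mats A l) (f 1) (f (Fin.last _)) :=
          mul_le_mul h1 h2 zero_le_one (le_trans zero_le_one h1)
      _ ≤ ∑ m, (A a) (f 0) m * (mats A l) m (f (Fin.last (l.length + 1))) := by
          refine Finset.single_le_sum (f := fun m => (A a) (f 0) m *
            (mats A l) m (f (Fin.last (l.length + 1)))) (fun m _ =>
            mul_nonneg ((hA a).nonneg _ _) (hNl.nonneg _ _)) (Finset.mem_univ (f 1))

end Paths

section Norms
variable {s : ℕ} (A : Fin 2 → Matrix (Fin s) (Fin s) ℝ)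

lemma l2OpNorm_nonneg (M : Matrix (Fin s) (Fin s) ℝ) : 0 ≤ l2OpNorm M := norm_nonneg _

lemma l2OpNorm_mul_le (M N : Matrix (Fin s) (Fin s) ℝ) :
    l2OpNorm (M * N) ≤ l2OpNorm M * l2OpNorm N := by
  unfold l2OpNorm
  rw [_root_.map_mul]
  exact norm_mul_le _ _

lemma entry_le_l2OpNorm (M : Matrix (Fin s) (Fin s) ℝ) (i j : Fin s) :
    M i j ≤ l2OpNorm M :=
  le_trans (le_abs_self _) (entry_le_opNorm M i j)

/-- Maximal norm over words of a given length. -/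
noncomputable def aN (m : ℕ) : ℝ := ⨆ w : Fin m → Fin 2, l2OpNorm (wordProd A w)

lemma bdd_norm (m : ℕ) :
    BddAbove (Set.range fun w : Fin m → Fin 2 => l2OpNorm (wordProd A w)) :=
  Set.Finite.bddAbove (Set.finite_range _)

lemma le_aN {m : ℕ} (w : Fin m → Fin 2) : l2OpNorm (wordProd A w) ≤ aN A m :=
  le_ciSup (bdd_norm A m) w

lemma aN_nonneg (m : ℕ) : 0 ≤ aN A m :=
  le_trans (l2OpNorm_nonneg _) (le_aN A (default : Fin m → Fin 2))

lemma mats_le_aN (l : List (Fin 2)) : l2OpNorm (mats A l) ≤ aN A l.length := by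
  obtain ⟨w, hw⟩ := exists_word_eq_mats A l
  rw [← hw]
  exact le_aN A w

lemma aN_add (m k : ℕ) : aN A (m + k) ≤ aN A k * aN A m := by
  refine ciSup_le fun w => ?_
  rw [wordProd_eq_mats]
  set l := (List.ofFn w).reverse with hldef
  have hl : l.length = m + k := by simp [hldef]
  have hsplit : mats A l = mats A (l.take k) * mats A (l.drop k) := by
    rw [← mats_append, List.take_append_drop]
  rw [hsplit]
  refine (l2OpNorm_mul_le _ _).trans ?_
  have h1 : l2OpNorm (mats A (l.take k)) ≤ aN A k := by
    have := mats_le_aN A (l.take k)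
    rwa [List.length_take, hl, min_eq_left (by omega)] at this
  have h2 : l2OpNorm (mats A (l.drop k)) ≤ aN A m := by
    have := mats_le_aN A (l.drop k)
    rwa [List.length_drop, hl, show m + k - k = m by omega] at this
  exact mul_le_mul h1 h2 (l2OpNorm_nonneg _) (aN_nonneg A k)

lemma aN_zero_le : aN A 0 ≤ 1 := by
  refine ciSup_le fun w => ?_
  have hw : wordProd A w = 1 := by
    simp [wordProd]
  rw [hw]
  show ‖toEuclideanCLM (𝕜 := ℝ) (1 : Matrix (Fin s) (Fin s) ℝ)‖ ≤ 1
  rw [_root_.map_one]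
  exact ContinuousLinearMap.norm_id_le

lemma aN_le_pow (m : ℕ) : aN A m ≤ (max 1 (aN A 1)) ^ m := by
  induction m with
  | zero => simpa using aN_zero_le A
  | succ m ih =>
    refine (aN_add A m 1).trans ?_
    rw [pow_succ']
    exact mul_le_mul (le_max_right _ _) ih (aN_nonneg A m)
      (le_trans zero_le_one (le_max_left _ _))

lemma aN_growth {θ : ℝ} (hθ : 1 ≤ θ) {m₀ : ℕ} (h : aN A m₀ ≤ θ ^ m₀) (hm₀ : 1 ≤ m₀) :
    ∀ N, aN A N ≤ (max 1 (aN A 1)) ^ m₀ * θ ^ N := by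
  intro N
  induction N using Nat.strong_induction_on with
  | _ N ih =>
    by_cases hN : N < m₀
    · calc aN A N ≤ (max 1 (aN A 1)) ^ N := aN_le_pow A N
        _ ≤ (max 1 (aN A 1)) ^ m₀ := by
            apply pow_le_pow_right₀ (le_max_left _ _) (le_of_lt hN)
        _ ≤ (max 1 (aN A 1)) ^ m₀ * θ ^ N := by
            refine le_mul_of_one_le_right ?_ (one_le_pow₀ hθ)
            positivity
    · push_neg at hN
      have hsplit : N = m₀ + (N - m₀) := by omega
      calc aN A N = aN A (m₀ + (N - m₀)) := by rw [← hsplit]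
        _ ≤ aN A (N - m₀) * aN A m₀ := aN_add A m₀ (N - m₀)
        _ ≤ ((max 1 (aN A 1)) ^ m₀ * θ ^ (N - m₀)) * θ ^ m₀ := by
            refine mul_le_mul (ih _ (by omega)) h (aN_nonneg A m₀) (by positivity)
        _ = (max 1 (aN A 1)) ^ m₀ * θ ^ N := by
            rw [mul_assoc, ← pow_add]
            congr 2
            omega

lemma jsr_nonneg : 0 ≤ JSR A :=
  le_ciInf fun _ => Real.iSup_nonneg fun _ => Real.rpow_nonneg (l2OpNorm_nonneg _) _

lemma bddBelow_jsr : BddBelow (Set.range fun n : {m : ℕ // 1 ≤ m} =>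
    ⨆ w : Fin (n : ℕ) → Fin 2, l2OpNorm (wordProd A w) ^ (1 / ((n : ℕ) : ℝ))) := by
  refine ⟨0, ?_⟩
  rintro x ⟨n, rfl⟩
  exact Real.iSup_nonneg fun _ => Real.rpow_nonneg (l2OpNorm_nonneg _) _

lemma jsr_le (n : {m : ℕ // 1 ≤ m}) :
    JSR A ≤ ⨆ w : Fin (n : ℕ) → Fin 2, l2OpNorm (wordProd A w) ^ (1 / ((n : ℕ) : ℝ)) :=
  ciInf_le (bddBelow_jsr A) n

end Norms

section Diag
variable {s : ℕ}

lemma diag_pow_ge {M : Matrix (Fin s) (Fin s) ℝ} (hM : NatMat M) {i : Fin s}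
    (h : 1 ≤ M i i) : ∀ k, 1 ≤ (M ^ k) i i := by
  intro k
  induction k with
  | zero => simp
  | succ k ih =>
    rw [pow_succ, Matrix.mul_apply]
    calc (1:ℝ) = 1 * 1 := by ring
      _ ≤ (M ^ k) i i * M i i := mul_le_mul ih h zero_le_one (le_trans zero_le_one ih)
      _ ≤ ∑ m, (M ^ k) i m * M m i := by
          refine Finset.single_le_sum (f := fun m => (M ^ k) i m * M m i)
            (fun m _ => mul_nonneg ((hM.pow k).nonneg _ _) (hM.nonneg _ _))
            (Finset.mem_univ i)

lemma exists_list_pow (A : Fin 2 → Matrix (Fin s) (Fin s) ℝ) (l : List (Fin 2)) (k : ℕ) :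
    ∃ L : List (Fin 2), L.length = k * l.length ∧ mats A L = (mats A l) ^ k := by
  induction k with
  | zero => exact ⟨[], by simp, by simp⟩
  | succ k ih =>
    obtain ⟨L, hL1, hL2⟩ := ih
    exact ⟨l ++ L, by simp [hL1]; ring, by rw [mats_append, hL2, pow_succ']⟩

end Diag
end JSRaux

namespace JSRaux
section Spectral
variable {s : ℕ}

lemma spectralRadius_matrix_eq_clm (M : Matrix (Fin s) (Fin s) ℝ) :
    spectralRadius ℂ (M.map (Complex.ofReal : ℝ → ℂ)) =
      spectralRadius ℂ (toEuclideanCLM (𝕜 := ℂ) (M.map (Complex.ofReal : ℝ → ℂ))) := by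
  simp only [spectralRadius, AlgEquiv.spectrum_eq]

lemma clm_pow (M : Matrix (Fin s) (Fin s) ℝ) (k : ℕ) :
    (toEuclideanCLM (𝕜 := ℂ) (M.map (Complex.ofReal : ℝ → ℂ))) ^ k
      = toEuclideanCLM (𝕜 := ℂ) ((M ^ k).map (Complex.ofReal : ℝ → ℂ)) := by
  have h1 : (M ^ k).map (Complex.ofReal : ℝ → ℂ) = (M.map (Complex.ofReal : ℝ → ℂ)) ^ k := by
    have h := map_pow (Complex.ofRealHom.mapMatrix :
      Matrix (Fin s) (Fin s) ℝ →+* Matrix (Fin s) (Fin s) ℂ) M k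
    simp only [RingHom.mapMatrix_apply] at h
    exact h
  rw [h1, map_pow]

lemma rpow_inv_le {x c : ℝ} (hx : 0 ≤ x) (m : ℕ) (hm : 1 ≤ m)
    (h : x ^ (1/(m:ℝ)) ≤ c) : x ≤ c ^ m := by
  have hm0 : (0:ℝ) < m := by exact_mod_cast hm
  have h2 := Real.rpow_le_rpow (Real.rpow_nonneg hx _) h (le_of_lt hm0)
  calc x = (x ^ (1/(m:ℝ))) ^ ((m:ℕ):ℝ) := by
        rw [← Real.rpow_mul hx, one_div_mul_cancel (ne_of_gt hm0), Real.rpow_one]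
    _ ≤ c ^ ((m:ℕ):ℝ) := h2
    _ = c ^ m := Real.rpow_natCast c m

end Spectral
end JSRaux


open JSRaux

/-- A pair of nonnegative-integer matrices with JSR at most one has the
finiteness property. -/
theorem finiteness_property_of_jsr_le_one {s : ℕ}
    (A₁ A₂ : Matrix (Fin s) (Fin s) ℝ)
    (h₁ : ∀ i j, ∃ k : ℕ, A₁ i j = k)
    (h₂ : ∀ i j, ∃ k : ℕ, A₂ i j = k)
    (hJSR : JSR ![A₁, A₂] ≤ 1) :
    FinitenessProperty ![A₁, A₂] := by
  show ∃ n : ℕ, 1 ≤ n ∧ ∃ w : Fin n → Fin 2,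
    specRad (wordProd ![A₁, A₂] w) ^ (1 / (n : ℝ)) = JSR ![A₁, A₂]
  set A : Fin 2 → Matrix (Fin s) (Fin s) ℝ := ![A₁, A₂] with hAdef
  have hA : ∀ t, NatMat (A t) := by
    intro t
    fin_cases t
    · simpa [hAdef, NatMat] using h₁
    · simpa [hAdef, NatMat] using h₂
  by_cases hcase : ∀ m, 1 ≤ m → ∃ w : Fin m → Fin 2, wordProd A w ≠ 0
  case neg =>
    push_neg at hcase
    obtain ⟨m, hm, hzero⟩ := hcase
    have hJSR0 : JSR A = 0 := by
      have hle : JSR A ≤ 0 := by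
        refine le_trans (jsr_le A ⟨m, hm⟩) ?_
        have : ∀ w : Fin m → Fin 2,
            l2OpNorm (wordProd A w) ^ (1 / ((m:ℕ):ℝ)) = 0 := by
          intro w
          rw [hzero w]
          have : l2OpNorm (0 : Matrix (Fin s) (Fin s) ℝ) = 0 := by
            unfold l2OpNorm
            rw [map_zero, norm_zero]
          rw [this, Real.zero_rpow]
          positivity
        refine ciSup_le fun w => le_of_eq (this w)
      exact le_antisymm hle (jsr_nonneg A)
    refine ⟨m, hm, default, ?_⟩
    rw [hzero default, hJSR0]
    have hmap : ((0 : Matrix (Fin s) (Fin s) ℝ)).map (Complex.ofReal : ℝ → ℂ) = 0 := by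
      ext i j; simp
    have hz : spectralRadius ℂ ((0 : Matrix (Fin s) (Fin s) ℝ).map (Complex.ofReal : ℝ → ℂ)) = 0 := by
      rw [spectralRadius_matrix_eq_clm, hmap, map_zero, spectrum.spectralRadius_zero]
    unfold specRad
    rw [hz, ENNReal.toReal_zero, Real.zero_rpow (by positivity)]
  case pos =>
    -- s ≥ 1
    have hs : 1 ≤ s := by
      obtain ⟨w, hw⟩ := hcase 1 le_rfl
      by_contra hscon
      have hs0 : s = 0 := by omega
      subst hs0
      exact hw (by ext i j; exact i.elim0)
    obtain ⟨w₀, hw₀⟩ := hcase s hs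
    set l₀ := (List.ofFn w₀).reverse with hl₀
    have hm₀ : mats A l₀ ≠ 0 := by rw [← wordProd_eq_mats]; exact hw₀
    have hl₀len : l₀.length = s := by simp [hl₀]
    obtain ⟨i, j, hij⟩ : ∃ i j, mats A l₀ i j ≠ 0 := by
      by_contra hcon; push_neg at hcon
      exact hm₀ (by ext i j; simpa using hcon i j)
    obtain ⟨f, hf0, hfl, hfs⟩ := path_of_ne_zero A hA l₀ i j hij
    obtain ⟨a, b, hab, hfab⟩ :
        ∃ a b : Fin (l₀.length + 1), (a:ℕ) < (b:ℕ) ∧ f a = f b := by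
      obtain ⟨x, y, hxy, hf⟩ := Fintype.exists_ne_map_eq_of_card_lt f
        (by simp only [Fintype.card_fin, hl₀len]; omega)
      rcases lt_or_gt_of_ne hxy with h | h
      · exact ⟨x, y, h, hf⟩
      · exact ⟨y, x, h, hf.symm⟩
    set n := (b:ℕ) - (a:ℕ) with hn
    have hn1 : 1 ≤ n := by omega
    have hble : (b:ℕ) ≤ l₀.length := by omega
    set l' := (l₀.drop (a:ℕ)).take n with hl'
    have hl'len : l'.length = n := by
      rw [hl', List.length_take, List.length_drop]
      omega
    set g : Fin (l'.length + 1) → Fin s :=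
      fun k => f ⟨(a:ℕ) + (k:ℕ), by have hk := k.isLt; omega⟩ with hg
    have hgs : ∀ k : Fin l'.length, (A (l'.get k)) (g k.castSucc) (g k.succ) ≠ 0 := by
      intro k
      have hk : (k:ℕ) < n := by rw [← hl'len]; exact k.isLt
      have hkl : (a:ℕ) + (k:ℕ) < l₀.length := by omega
      have hget : l'.get k = l₀.get ⟨(a:ℕ) + (k:ℕ), hkl⟩ := by
        simp only [hl', List.get_eq_getElem, List.getElem_take, List.getElem_drop]
      have hstep := hfs ⟨(a:ℕ) + (k:ℕ), hkl⟩
      have e1 : g k.castSucc = f (Fin.castSucc ⟨(a:ℕ)+(k:ℕ), hkl⟩) :=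
        congrArg f (by apply Fin.ext; simp [hg])
      have e2 : g k.succ = f (Fin.succ ⟨(a:ℕ)+(k:ℕ), hkl⟩) :=
        congrArg f (by apply Fin.ext; simp [hg]; omega)
      rw [hget, e1, e2]
      exact hstep
    have hone := one_le_of_path A hA l' g hgs
    have hg0 : g 0 = f a := congrArg f (by apply Fin.ext; simp [hg])
    have hgl : g (Fin.last _) = f b := congrArg f (by apply Fin.ext; simp [hg, hl'len]; omega)
    set i₀ := f a with hi₀
    set P := mats A l' with hP
    have hdiag : 1 ≤ P i₀ i₀ := by
      rw [hg0, hgl, ← hfab] at hone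
      exact hone
    have hNP : NatMat P := natMat_mats A hA l'
    have hdiagk : ∀ k, 1 ≤ (P ^ k) i₀ i₀ := diag_pow_ge hNP hdiag
    have hnormk : ∀ k : ℕ, l2OpNorm (P ^ k) ≤ aN A (k * n) := by
      intro k
      obtain ⟨L, hL1, hL2⟩ := exists_list_pow A l' k
      rw [← hL2]
      have h := mats_le_aN A L
      rwa [hL1, hl'len] at h
    -- JSR ≥ 1
    have hnorm_ge : ∀ {m : ℕ} (w : Fin m → Fin 2), wordProd A w ≠ 0 →
        1 ≤ l2OpNorm (wordProd A w) := by
      intro m w hw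
      have hN : NatMat (wordProd A w) := by
        rw [wordProd_eq_mats]; exact natMat_mats A hA _
      obtain ⟨i', j', hij'⟩ : ∃ i' j', wordProd A w i' j' ≠ 0 := by
        by_contra hc; push_neg at hc
        exact hw (by ext i' j'; simpa using hc i' j')
      exact le_trans (hN.one_le hij') (entry_le_l2OpNorm _ _ _)
    have hJSRge : (1:ℝ) ≤ JSR A := by
      refine le_ciInf fun m => ?_
      obtain ⟨w, hw⟩ := hcase m m.2
      refine le_trans ?_ (le_ciSup (Set.Finite.bddAbove (Set.finite_range _)) w)
      exact Real.one_le_rpow (hnorm_ge w hw) (by positivity)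
    have hJSReq : JSR A = 1 := le_antisymm hJSR hJSRge
    -- spectral radius
    set Mc := P.map (Complex.ofReal : ℝ → ℂ) with hMc
    set T := toEuclideanCLM (𝕜 := ℂ) Mc with hT
    have hGel := spectrum.pow_nnnorm_pow_one_div_tendsto_nhds_spectralRadius T
    have hTk : ∀ k : ℕ, T ^ k = toEuclideanCLM (𝕜 := ℂ) ((P ^ k).map Complex.ofReal) := by
      intro k
      rw [hT, hMc]
      exact clm_pow P k
    have hTklow : ∀ k : ℕ, (1:ℝ) ≤ ‖T ^ k‖ := by
      intro k
      have h1 : (1:ℝ) ≤ ‖((P ^ k).map (Complex.ofReal : ℝ → ℂ)) i₀ i₀‖ := by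
        rw [Matrix.map_apply, Complex.norm_real]
        exact le_trans (hdiagk k) (le_abs_self _)
      rw [hTk k]
      exact le_trans h1 (entry_le_opNorm _ i₀ i₀)
    have hsrlow : 1 ≤ spectralRadius ℂ T := by
      refine ge_of_tendsto hGel (Filter.eventually_atTop.mpr ⟨1, fun k hk => ?_⟩)
      have h1 : (1:ℝ≥0∞) ≤ (‖T ^ k‖₊ : ℝ≥0∞) := by
        rw [ENNReal.one_le_coe_iff, ← NNReal.one_le_coe, coe_nnnorm]
        exact hTklow k
      calc (1:ℝ≥0∞) = 1 ^ (1/(k:ℝ)) := (ENNReal.one_rpow _).symm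
        _ ≤ (‖T ^ k‖₊ : ℝ≥0∞) ^ (1/(k:ℝ)) := ENNReal.rpow_le_rpow h1 (by positivity)
    have hupper : ∀ ε : ℝ, 0 < ε →
        spectralRadius ℂ T ≤ ENNReal.ofReal ((1+ε)^(n+1)) := by
      intro ε hε
      have hθ : (1:ℝ) < 1 + ε := by linarith
      have hJSRlt : JSR A < 1 + ε := lt_of_le_of_lt hJSR hθ
      obtain ⟨m₀, hm₀⟩ := exists_lt_of_ciInf_lt hJSRlt
      have haNm₀ : aN A (m₀ : ℕ) ≤ (1+ε) ^ (m₀ : ℕ) := by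
        refine ciSup_le fun w => ?_
        have h2 : l2OpNorm (wordProd A w) ^ (1 / ((m₀:ℕ):ℝ)) < 1 + ε :=
          lt_of_le_of_lt (le_ciSup (f := fun w : Fin (m₀:ℕ) → Fin 2 =>
            l2OpNorm (wordProd A w) ^ (1 / ((m₀:ℕ):ℝ)))
            (Set.Finite.bddAbove (Set.finite_range _)) w) hm₀
        exact rpow_inv_le (l2OpNorm_nonneg _) (m₀ : ℕ) m₀.2 (le_of_lt h2)
      set B := (max 1 (aN A 1)) ^ (m₀ : ℕ) with hB
      have hgrow := aN_growth A (le_of_lt hθ) haNm₀ m₀.2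
      have hB1 : (1:ℝ) ≤ B := one_le_pow₀ (le_max_left _ _)
      have hTkup : ∀ k : ℕ, ‖T ^ k‖ ≤ (s:ℝ)^2 * (B * (1+ε) ^ (k*n)) := by
        intro k
        rw [hTk k]
        refine le_trans (opNorm_le_sum_entries _) ?_
        have hent : ∀ i' j' : Fin s,
            ‖((P ^ k).map (Complex.ofReal : ℝ → ℂ)) i' j'‖ ≤ B * (1+ε)^(k*n) := by
          intro i' j'
          rw [Matrix.map_apply, Complex.norm_real]
          refine le_trans (entry_le_opNorm (P ^ k) i' j') ?_
          exact le_trans (hnormk k) (hgrow (k*n))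
        calc (∑ i' : Fin s, ∑ j' : Fin s, ‖((P ^ k).map (Complex.ofReal : ℝ → ℂ)) i' j'‖)
            ≤ ∑ _i' : Fin s, ∑ _j' : Fin s, (B * (1+ε)^(k*n)) :=
              Finset.sum_le_sum fun i' _ => Finset.sum_le_sum fun j' _ => hent i' j'
          _ = (s:ℝ)^2 * (B * (1+ε)^(k*n)) := by
              simp [Finset.sum_const, Finset.card_univ]
              ring
      obtain ⟨K, hK⟩ := pow_unbounded_of_one_lt ((s:ℝ)^2 * B) hθ
      have hbound : ∀ k : ℕ, K + 1 ≤ k →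
          (‖T ^ k‖₊ : ℝ≥0∞) ^ (1/(k:ℝ)) ≤ ENNReal.ofReal ((1+ε)^(n+1)) := by
        intro k hk
        have hk0 : (k:ℝ) ≠ 0 := Nat.cast_ne_zero.mpr (by omega)
        have hTle : ‖T ^ k‖ ≤ ((1+ε)^(n+1))^k := by
          refine le_trans (hTkup k) ?_
          have hc1 : (s:ℝ)^2 * (B * (1+ε) ^ (k*n)) = ((s:ℝ)^2 * B) * (1+ε)^(k*n) := by ring
          rw [hc1]
          have hc2 : ((s:ℝ)^2 * B) * (1+ε)^(k*n) ≤ (1+ε)^K * (1+ε)^(k*n) :=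
            mul_le_mul_of_nonneg_right (le_of_lt hK) (by positivity)
          refine hc2.trans ?_
          rw [← pow_add, ← pow_mul]
          refine pow_le_pow_right₀ (le_of_lt hθ) ?_
          have hKk : K ≤ k := by omega
          calc K + k * n ≤ k + k * n := by omega
            _ = (n+1) * k := by ring
        have h3 : (‖T ^ k‖₊ : ℝ≥0∞) ≤ ENNReal.ofReal (((1+ε)^(n+1))^k) := by
          rw [← ENNReal.ofReal_coe_nnreal, coe_nnnorm]
          exact ENNReal.ofReal_le_ofReal hTle
        refine le_trans (ENNReal.rpow_le_rpow h3 (by positivity)) ?_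
        rw [ENNReal.ofReal_pow (by positivity), ← ENNReal.rpow_natCast _ k,
          ← ENNReal.rpow_mul, mul_one_div_cancel hk0, ENNReal.rpow_one]
      exact le_of_tendsto hGel (Filter.eventually_atTop.mpr ⟨K+1, hbound⟩)
    have hfin : spectralRadius ℂ T ≠ ⊤ :=
      ne_top_of_le_ne_top ENNReal.ofReal_ne_top (hupper 1 one_pos)
    set r := (spectralRadius ℂ T).toReal with hr
    have hrge : (1:ℝ) ≤ r := by
      have := ENNReal.toReal_mono hfin hsrlow
      simpa using this
    have hrle : ∀ ε : ℝ, 0 < ε → r ≤ (1+ε)^(n+1) := by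
      intro ε hε
      have := ENNReal.toReal_mono ENNReal.ofReal_ne_top (hupper ε hε)
      rwa [ENNReal.toReal_ofReal (by positivity)] at this
    have hre : r = 1 := by
      refine le_antisymm ?_ hrge
      by_contra hcon
      push_neg at hcon
      set y := r ^ (1/((n:ℝ)+1)) with hy
      have hy1 : 1 < y := by
        rw [hy]
        rw [Real.one_lt_rpow_iff (by linarith : (0:ℝ) ≤ r)]
        left
        constructor
        · exact hcon
        · positivity
      have hyp : y ^ (n+1) = r := by
        rw [hy, ← Real.rpow_natCast (r ^ (1/((n:ℝ)+1))) (n+1), ← Real.rpow_mul (by linarith)]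
        rw [show ((n+1 : ℕ):ℝ) = (n:ℝ)+1 by push_cast; ring]
        rw [one_div_mul_cancel (by positivity), Real.rpow_one]
      have hεy : (0:ℝ) < (y - 1)/2 := by linarith
      have h5 := hrle ((y-1)/2) hεy
      have h6 : (1 + (y-1)/2)^(n+1) < y^(n+1) := by
        refine pow_lt_pow_left₀ ?_ (by linarith) (by omega)
        linarith
      rw [hyp] at h6
      linarith
    -- assemble
    refine ⟨l'.length, by omega, ?_⟩
    obtain ⟨w', hw'⟩ := exists_word_eq_mats A l'
    refine Exists.intro w' ?_
    rw [hw', ← hP]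
    have hspec : specRad P = r := by
      unfold specRad
      rw [spectralRadius_matrix_eq_clm, ← hMc, ← hT, hr]
    rw [hspec, hre, Real.one_rpow, hJSReq]
end

section
/- Let A₁, A₂ be real s×s matrices all of whose entries are nonnegative integers. If A₁·A₂ ≤ A₁·A₁ entrywise, then the pair (A₁, A₂) has the finiteness property. -/
open Matrix

open Matrix Filter Topology
open scoped ENNReal NNReal

namespace JSRaux

variable {s : ℕ}

noncomputable def Tr (A : Matrix (Fin s) (Fin s) ℝ) :
    EuclideanSpace ℝ (Fin s) →L[ℝ] EuclideanSpace ℝ (Fin s) :=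
  Matrix.toEuclideanCLM (𝕜 := ℝ) A

noncomputable def Tc (A : Matrix (Fin s) (Fin s) ℝ) :
    EuclideanSpace ℂ (Fin s) →L[ℂ] EuclideanSpace ℂ (Fin s) :=
  Matrix.toEuclideanCLM (𝕜 := ℂ) (A.map Complex.ofReal)

/-- plain vector into Euclidean space -/
noncomputable def toE (v : Fin s → ℝ) : EuclideanSpace ℝ (Fin s) := (WithLp.equiv 2 _).symm v

noncomputable def toEc (v : Fin s → ℂ) : EuclideanSpace ℂ (Fin s) := (WithLp.equiv 2 _).symm v

lemma toE_apply (v : Fin s → ℝ) (i : Fin s) : toE v i = v i := rfl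
lemma toEc_apply (v : Fin s → ℂ) (i : Fin s) : toEc v i = v i := rfl

noncomputable def nr (v : Fin s → ℝ) : ℝ := Real.sqrt (∑ i, v i ^ 2)
noncomputable def nc (v : Fin s → ℂ) : ℝ := Real.sqrt (∑ i, ‖v i‖ ^ 2)

lemma nr_nonneg (v : Fin s → ℝ) : 0 ≤ nr v := Real.sqrt_nonneg _

lemma norm_toE (v : Fin s → ℝ) : ‖toE v‖ = nr v := by
  rw [EuclideanSpace.norm_eq, nr]
  congr 1; exact Finset.sum_congr rfl fun i _ => by rw [toE_apply, Real.norm_eq_abs, sq_abs]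

lemma norm_toEc (v : Fin s → ℂ) : ‖toEc v‖ = nc v := by
  rw [EuclideanSpace.norm_eq, nc]
  congr 1

lemma Tr_apply (A : Matrix (Fin s) (Fin s) ℝ) (v : Fin s → ℝ) :
    Tr A (toE v) = toE (A.mulVec v) := by
  ext i
  exact congrFun (Matrix.ofLp_toEuclideanCLM A (toE v)) i

lemma Tc_apply (A : Matrix (Fin s) (Fin s) ℝ) (v : Fin s → ℂ) :
    Tc A (toEc v) = toEc ((A.map Complex.ofReal).mulVec v) := by
  ext i
  exact congrFun (Matrix.ofLp_toEuclideanCLM (A.map Complex.ofReal) (toEc v)) i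

lemma euclid_eq_toE (x : EuclideanSpace ℝ (Fin s)) : x = toE (fun i => x i) := rfl
lemma euclid_eq_toEc (x : EuclideanSpace ℂ (Fin s)) : x = toEc (fun i => x i) := rfl

noncomputable def specRadAux (A : Matrix (Fin s) (Fin s) ℝ) : ℝ :=
  (spectralRadius ℂ (A.map (Complex.ofReal : ℝ → ℂ))).toReal

lemma l2OpNorm_eq (A : Matrix (Fin s) (Fin s) ℝ) :
    ‖Matrix.toEuclideanCLM (𝕜 := ℝ) A‖ = ‖Tr A‖ := rfl

lemma opNorm_Tr_le (A : Matrix (Fin s) (Fin s) ℝ) {C : ℝ} (hC : 0 ≤ C)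
    (h : ∀ v : Fin s → ℝ, nr (A.mulVec v) ≤ C * nr v) : ‖Tr A‖ ≤ C := by
  apply ContinuousLinearMap.opNorm_le_bound _ hC
  intro x
  have e1 : ‖Tr A x‖ = nr (A.mulVec fun i => x i) := by
    rw [← norm_toE, ← Tr_apply]; rfl
  have e2 : ‖x‖ = nr (fun i => x i) := norm_toE _
  rw [e1, e2]; exact h _

lemma nr_mulVec_le (A : Matrix (Fin s) (Fin s) ℝ) (v : Fin s → ℝ) :
    nr (A.mulVec v) ≤ ‖Tr A‖ * nr v := by
  have := (Tr A).le_opNorm (toE v)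
  rwa [Tr_apply, norm_toE, norm_toE] at this

end JSRaux

namespace JSRaux
variable {s : ℕ}

lemma nr_mono {v w : Fin s → ℝ} (h : ∀ i, |v i| ≤ |w i|) : nr v ≤ nr w := by
  apply Real.sqrt_le_sqrt
  apply Finset.sum_le_sum
  intro i _
  rw [← sq_abs (v i), ← sq_abs (w i)]
  exact pow_le_pow_left₀ (abs_nonneg _) (h i) 2

lemma nr_abs (v : Fin s → ℝ) : nr (fun i => |v i|) = nr v := by
  unfold nr; congr 1; exact Finset.sum_congr rfl fun i _ => by rw [sq_abs]

lemma mulVec_abs_le {A B : Matrix (Fin s) (Fin s) ℝ}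
    (hA0 : ∀ i j, 0 ≤ A i j) (hAB : ∀ i j, A i j ≤ B i j) (v : Fin s → ℝ) (i : Fin s) :
    |A.mulVec v i| ≤ B.mulVec (fun j => |v j|) i := by
  unfold Matrix.mulVec dotProduct
  calc |∑ j, A i j * v j| ≤ ∑ j, |A i j * v j| := Finset.abs_sum_le_sum_abs _ _
    _ ≤ ∑ j, B i j * |v j| := by
        apply Finset.sum_le_sum; intro j _
        rw [abs_mul, abs_of_nonneg (hA0 i j)]
        exact mul_le_mul_of_nonneg_right (hAB i j) (abs_nonneg _)

lemma opNorm_Tr_mono {A B : Matrix (Fin s) (Fin s) ℝ}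
    (hA0 : ∀ i j, 0 ≤ A i j) (hAB : ∀ i j, A i j ≤ B i j) : ‖Tr A‖ ≤ ‖Tr B‖ := by
  apply opNorm_Tr_le _ (norm_nonneg _)
  intro v
  calc nr (A.mulVec v) ≤ nr (B.mulVec fun j => |v j|) := by
        apply nr_mono; intro i
        exact (mulVec_abs_le hA0 hAB v i).trans (le_abs_self _)
    _ ≤ ‖Tr B‖ * nr (fun j => |v j|) := nr_mulVec_le _ _
    _ = ‖Tr B‖ * nr v := by rw [nr_abs]

lemma mulVec_map_ofReal (A : Matrix (Fin s) (Fin s) ℝ) (v : Fin s → ℝ) :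
    (A.map Complex.ofReal).mulVec (fun j => (v j : ℂ)) = fun i => ((A.mulVec v i : ℝ) : ℂ) := by
  funext i
  simp [Matrix.mulVec, dotProduct, Matrix.map_apply]

lemma nc_ofReal (v : Fin s → ℝ) : nc (fun i => ((v i : ℝ) : ℂ)) = nr v := by
  unfold nc nr; congr 1
  exact Finset.sum_congr rfl fun i _ => by rw [Complex.norm_real, Real.norm_eq_abs, sq_abs]

lemma opNorm_Tr_le_Tc (A : Matrix (Fin s) (Fin s) ℝ) : ‖Tr A‖ ≤ ‖Tc A‖ := by
  apply opNorm_Tr_le _ (norm_nonneg _)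
  intro v
  have h1 : nr (A.mulVec v) = ‖Tc A (toEc fun j => (v j : ℂ))‖ := by
    rw [Tc_apply, mulVec_map_ofReal, norm_toEc, nc_ofReal]
  have h2 : ‖toEc (fun j => ((v j : ℝ) : ℂ))‖ = nr v := by rw [norm_toEc, nc_ofReal]
  rw [h1, ← h2]
  exact (Tc A).le_opNorm _

lemma re_mulVec (A : Matrix (Fin s) (Fin s) ℝ) (v : Fin s → ℂ) (i : Fin s) :
    ((A.map Complex.ofReal).mulVec v i).re = A.mulVec (fun j => (v j).re) i := by
  unfold Matrix.mulVec dotProduct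
  rw [Complex.re_sum]
  exact Finset.sum_congr rfl fun j _ => by simp [Matrix.map_apply, Complex.mul_re]

lemma im_mulVec (A : Matrix (Fin s) (Fin s) ℝ) (v : Fin s → ℂ) (i : Fin s) :
    ((A.map Complex.ofReal).mulVec v i).im = A.mulVec (fun j => (v j).im) i := by
  unfold Matrix.mulVec dotProduct
  rw [Complex.im_sum]
  exact Finset.sum_congr rfl fun j _ => by simp [Matrix.map_apply, Complex.mul_im]

lemma opNorm_Tc_le_Tr (A : Matrix (Fin s) (Fin s) ℝ) : ‖Tc A‖ ≤ ‖Tr A‖ := by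
  apply ContinuousLinearMap.opNorm_le_bound _ (norm_nonneg _)
  intro z
  set v : Fin s → ℂ := fun i => z i with hv
  set x : Fin s → ℝ := fun i => (v i).re with hx
  set y : Fin s → ℝ := fun i => (v i).im with hy
  have hz : ‖z‖ ^ 2 = nr x ^ 2 + nr y ^ 2 := by
    rw [show z = toEc v from rfl, norm_toEc]
    unfold nc nr
    rw [Real.sq_sqrt (by positivity), Real.sq_sqrt (by positivity),
      Real.sq_sqrt (by positivity), ← Finset.sum_add_distrib]
    exact Finset.sum_congr rfl fun i _ => by
      rw [← Complex.re_add_im (v i)] ; simp [Complex.sq_norm,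
        Complex.normSq_apply] ; ring
  have hTz : ‖Tc A z‖ ^ 2 = nr (A.mulVec x) ^ 2 + nr (A.mulVec y) ^ 2 := by
    rw [show z = toEc v from rfl, Tc_apply, norm_toEc]
    unfold nc nr
    rw [Real.sq_sqrt (by positivity), Real.sq_sqrt (by positivity),
      Real.sq_sqrt (by positivity), ← Finset.sum_add_distrib]
    refine Finset.sum_congr rfl fun i _ => ?_
    rw [show ‖(A.map Complex.ofReal).mulVec v i‖ ^ 2
        = ((A.map Complex.ofReal).mulVec v i).re ^ 2
          + ((A.map Complex.ofReal).mulVec v i).im ^ 2 by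
      simp [Complex.sq_norm, Complex.normSq_apply]; ring]
    rw [re_mulVec, im_mulVec]
  have hb : ‖Tc A z‖ ^ 2 ≤ (‖Tr A‖ * ‖z‖) ^ 2 := by
    rw [hTz, mul_pow, hz, mul_add]
    have b1 : nr (A.mulVec x) ^ 2 ≤ ‖Tr A‖ ^ 2 * nr x ^ 2 := by
      rw [← mul_pow]
      exact pow_le_pow_left₀ (nr_nonneg _) (nr_mulVec_le A x) 2
    have b2 : nr (A.mulVec y) ^ 2 ≤ ‖Tr A‖ ^ 2 * nr y ^ 2 := by
      rw [← mul_pow]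
      exact pow_le_pow_left₀ (nr_nonneg _) (nr_mulVec_le A y) 2
    exact add_le_add b1 b2
  have h3 := Real.sqrt_le_sqrt hb
  rwa [Real.sqrt_sq (norm_nonneg _), Real.sqrt_sq (mul_nonneg (norm_nonneg _) (norm_nonneg _))]
    at h3

end JSRaux
namespace JSRaux
variable {s : ℕ}

lemma Tr_mul (A B : Matrix (Fin s) (Fin s) ℝ) : Tr (A * B) = Tr A * Tr B :=
  map_mul (Matrix.toEuclideanCLM (𝕜 := ℝ)) A B

lemma opNorm_Tr_mul_le (A B : Matrix (Fin s) (Fin s) ℝ) : ‖Tr (A * B)‖ ≤ ‖Tr A‖ * ‖Tr B‖ := by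
  rw [Tr_mul]; exact norm_mul_le _ _

lemma mapC_mul (A B : Matrix (Fin s) (Fin s) ℝ) :
    (A * B).map Complex.ofReal = A.map Complex.ofReal * B.map Complex.ofReal := by
  ext i j
  simp [Matrix.mul_apply, Matrix.map_apply]

lemma Tc_mul (A B : Matrix (Fin s) (Fin s) ℝ) : Tc (A * B) = Tc A * Tc B := by
  unfold Tc
  rw [mapC_mul, _root_.map_mul]

lemma Tc_pow (A : Matrix (Fin s) (Fin s) ℝ) (n : ℕ) : Tc (A ^ n) = Tc A ^ n := by
  induction n with
  | zero =>
    simp only [pow_zero]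
    unfold Tc
    rw [show (1 : Matrix (Fin s) (Fin s) ℝ).map Complex.ofReal = 1 from by
      ext i j; simp [Matrix.map_apply, Matrix.one_apply]; split <;> simp]
    exact map_one _
  | succ k ih => rw [pow_succ, pow_succ, Tc_mul, ih]

lemma specRad_eq_Tc (A : Matrix (Fin s) (Fin s) ℝ) :
    spectralRadius ℂ (A.map Complex.ofReal) = spectralRadius ℂ (Tc A) := by
  unfold Tc spectralRadius
  rw [AlgEquiv.spectrum_eq]

lemma specRad_toReal (A : Matrix (Fin s) (Fin s) ℝ) :
    specRadAux A = (spectralRadius ℂ (Tc A)).toReal := by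
  unfold specRadAux
  rw [specRad_eq_Tc]

lemma nnnorm_one_le : ‖(1 : EuclideanSpace ℂ (Fin s) →L[ℂ] EuclideanSpace ℂ (Fin s))‖₊ ≤ 1 :=
  ContinuousLinearMap.norm_id_le

lemma specRad_ne_top (A : Matrix (Fin s) (Fin s) ℝ) : spectralRadius ℂ (Tc A) ≠ ⊤ := by
  have h := spectrum.spectralRadius_le_pow_nnnorm_pow_one_div ℂ (Tc A) 0
  refine ne_top_of_le_ne_top ?_ h
  exact ENNReal.mul_ne_top (ENNReal.rpow_ne_top_of_nonneg (by norm_num) ENNReal.coe_ne_top)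
    (ENNReal.rpow_ne_top_of_nonneg (by norm_num) ENNReal.coe_ne_top)

lemma specRad_le_opNorm_pow (A : Matrix (Fin s) (Fin s) ℝ) (n : ℕ) :
    specRadAux A ≤ ‖Tr (A ^ (n + 1))‖ ^ (1 / ((n + 1 : ℕ) : ℝ)) := by
  have hc : (0 : ℝ) ≤ 1 / ((n : ℝ) + 1) := by positivity
  have h2 : spectralRadius ℂ (Tc A)
      ≤ (‖Tc A ^ (n + 1)‖₊ : ℝ≥0∞) ^ (1 / ((n : ℝ) + 1)) := by
    refine (spectrum.spectralRadius_le_pow_nnnorm_pow_one_div ℂ (Tc A) n).trans ?_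
    refine (mul_le_mul' le_rfl (ENNReal.rpow_le_one ?_ hc)).trans (le_of_eq (mul_one _))
    exact_mod_cast nnnorm_one_le
  have h3 := ENNReal.toReal_mono (ENNReal.rpow_ne_top_of_nonneg hc ENNReal.coe_ne_top) h2
  rw [← specRad_toReal] at h3
  calc specRadAux A ≤ ((‖Tc A ^ (n + 1)‖₊ : ℝ≥0∞) ^ (1 / ((n : ℝ) + 1))).toReal := h3
    _ = ‖Tc A ^ (n + 1)‖ ^ (1 / ((n : ℝ) + 1)) := by
        rw [← ENNReal.toReal_rpow, ENNReal.coe_toReal, coe_nnnorm]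
    _ ≤ ‖Tr (A ^ (n + 1))‖ ^ (1 / ((n : ℝ) + 1)) := by
        apply Real.rpow_le_rpow (norm_nonneg _) _ hc
        rw [← Tc_pow]
        exact opNorm_Tc_le_Tr _
    _ = ‖Tr (A ^ (n + 1))‖ ^ (1 / ((n + 1 : ℕ) : ℝ)) := by
        congr 1
        push_cast
        ring

end JSRaux

namespace JSRaux
variable {s : ℕ}

lemma specRadAux_nonneg (A : Matrix (Fin s) (Fin s) ℝ) : 0 ≤ specRadAux A :=
  ENNReal.toReal_nonneg

lemma exists_pow_bound (A : Matrix (Fin s) (Fin s) ℝ) {ε : ℝ} (hε : 0 < ε) :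
    ∃ C : ℝ, 1 ≤ C ∧ ∀ k : ℕ, ‖Tr (A ^ k)‖ ≤ C * (specRadAux A + ε) ^ k := by
  set b : ℝ := specRadAux A + ε with hbdef
  have hb : 0 < b := add_pos_of_nonneg_of_pos (specRadAux_nonneg A) hε
  have hlt : spectralRadius ℂ (Tc A) < ENNReal.ofReal b := by
    rw [← ENNReal.ofReal_toReal (specRad_ne_top A)]
    rw [ENNReal.ofReal_lt_ofReal_iff hb]
    rw [← specRad_toReal]
    exact lt_add_of_pos_right _ hε
  have hev : ∀ᶠ k : ℕ in atTop, (‖Tc A ^ k‖₊ : ℝ≥0∞) ^ (1 / (k : ℝ)) < ENNReal.ofReal b :=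
    (spectrum.pow_nnnorm_pow_one_div_tendsto_nhds_spectralRadius (Tc A)).eventually_lt_const hlt
  obtain ⟨N, hN⟩ := eventually_atTop.mp hev
  have key : ∀ k, max N 1 ≤ k → ‖Tr (A ^ k)‖ ≤ b ^ k := by
    intro k hk
    have hk1 : 1 ≤ k := le_trans (le_max_right _ _) hk
    have hkN : N ≤ k := le_trans (le_max_left _ _) hk
    have h := (hN k hkN).le
    have hkne : (k : ℝ) ≠ 0 := by positivity
    have h2 : (‖Tc A ^ k‖₊ : ℝ≥0∞) ≤ (ENNReal.ofReal b) ^ (k : ℝ) := by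
      have := ENNReal.rpow_le_rpow h (le_of_lt (by positivity : (0:ℝ) < (k:ℝ)))
      rwa [← ENNReal.rpow_mul, one_div, inv_mul_cancel₀ hkne, ENNReal.rpow_one] at this
    rw [ENNReal.rpow_natCast, ← ENNReal.ofReal_pow hb.le] at h2
    have h3 : ‖Tc A ^ k‖ ≤ b ^ k := by
      have := ENNReal.toReal_mono (by simp) h2
      rwa [ENNReal.coe_toReal, coe_nnnorm, ENNReal.toReal_ofReal (by positivity)] at this
    calc ‖Tr (A ^ k)‖ ≤ ‖Tc (A ^ k)‖ := opNorm_Tr_le_Tc _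
      _ = ‖Tc A ^ k‖ := by rw [Tc_pow]
      _ ≤ b ^ k := h3
  set M := max N 1 with hM
  refine ⟨1 + ∑ j ∈ Finset.range M, ‖Tr (A ^ j)‖ / b ^ j, ?_, ?_⟩
  · have : (0:ℝ) ≤ ∑ j ∈ Finset.range M, ‖Tr (A ^ j)‖ / b ^ j :=
      Finset.sum_nonneg fun j _ => div_nonneg (norm_nonneg _) (by positivity)
    linarith
  · intro k
    by_cases hcase : M ≤ k
    · refine (key k hcase).trans ?_
      have : (0:ℝ) ≤ ∑ j ∈ Finset.range M, ‖Tr (A ^ j)‖ / b ^ j :=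
        Finset.sum_nonneg fun j _ => div_nonneg (norm_nonneg _) (by positivity)
      nlinarith [pow_pos hb k]
    · push_neg at hcase
      have hterm : ‖Tr (A ^ k)‖ / b ^ k ≤ ∑ j ∈ Finset.range M, ‖Tr (A ^ j)‖ / b ^ j :=
        Finset.single_le_sum (f := fun j => ‖Tr (A ^ j)‖ / b ^ j) (fun j _ => div_nonneg (norm_nonneg _) (by positivity))
          (Finset.mem_range.mpr hcase)
      have hbk : (0:ℝ) < b ^ k := pow_pos hb k
      rw [div_le_iff₀ hbk] at hterm
      calc ‖Tr (A ^ k)‖ ≤ (∑ j ∈ Finset.range M, ‖Tr (A ^ j)‖ / b ^ j) * b ^ k := hterm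
        _ ≤ (1 + ∑ j ∈ Finset.range M, ‖Tr (A ^ j)‖ / b ^ j) * b ^ k := by nlinarith
        _ = _ := rfl

end JSRaux

namespace JSRaux
variable {s : ℕ}

def EntNonneg (A : Matrix (Fin s) (Fin s) ℝ) : Prop := ∀ i j, 0 ≤ A i j

def EntLE (A B : Matrix (Fin s) (Fin s) ℝ) : Prop := ∀ i j, A i j ≤ B i j

lemma entNonneg_one : EntNonneg (1 : Matrix (Fin s) (Fin s) ℝ) := by
  intro i j
  rw [Matrix.one_apply]
  split <;> norm_num

lemma entNonneg_mul {A B : Matrix (Fin s) (Fin s) ℝ} (hA : EntNonneg A) (hB : EntNonneg B) :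
    EntNonneg (A * B) := by
  intro i j
  rw [Matrix.mul_apply]
  exact Finset.sum_nonneg fun k _ => mul_nonneg (hA i k) (hB k j)

lemma entNonneg_pow {A : Matrix (Fin s) (Fin s) ℝ} (hA : EntNonneg A) (n : ℕ) :
    EntNonneg (A ^ n) := by
  induction n with
  | zero => simpa using entNonneg_one
  | succ k ih => rw [pow_succ]; exact entNonneg_mul ih hA

lemma entLE_mul {A B C D : Matrix (Fin s) (Fin s) ℝ} (hA0 : EntNonneg A) (hC0 : EntNonneg C)
    (hAB : EntLE A B) (hCD : EntLE C D) : EntLE (A * C) (B * D) := by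
  intro i j
  rw [Matrix.mul_apply, Matrix.mul_apply]
  apply Finset.sum_le_sum
  intro k _
  exact mul_le_mul (hAB i k) (hCD k j) (hC0 k j) (le_trans (hA0 i k) (hAB i k))

lemma entLE_refl (A : Matrix (Fin s) (Fin s) ℝ) : EntLE A A := fun _ _ => le_rfl

lemma entLE_trans {A B C : Matrix (Fin s) (Fin s) ℝ} (h1 : EntLE A B) (h2 : EntLE B C) :
    EntLE A C := fun i j => (h1 i j).trans (h2 i j)

section Comb
variable {A₁ A₂ : Matrix (Fin s) (Fin s) ℝ}

lemma key_pow (hA₁ : EntNonneg A₁) (hA₂ : EntNonneg A₂) (hle : EntLE (A₁ * A₂) (A₁ * A₁)) :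
    ∀ b : ℕ, EntLE (A₁ * A₂ ^ b) (A₁ ^ (b + 1)) := by
  intro b
  induction b with
  | zero => simpa using entLE_refl A₁
  | succ k ih =>
    have step1 : EntLE (A₁ * A₂ ^ (k + 1)) ((A₁ * A₁) * A₂ ^ k) := by
      rw [pow_succ' A₂ k, ← mul_assoc]
      exact entLE_mul (entNonneg_mul hA₁ hA₂) (entNonneg_pow hA₂ k) hle (entLE_refl _)
    have step2 : EntLE ((A₁ * A₁) * A₂ ^ k) (A₁ * A₁ ^ (k + 1)) := by
      rw [mul_assoc]
      exact entLE_mul hA₁ (entNonneg_mul hA₁ (entNonneg_pow hA₂ k)) (entLE_refl _) ih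
    refine entLE_trans (entLE_trans step1 step2) ?_
    rw [← pow_succ']
    exact entLE_refl _

lemma list_prod_bound (hA₁ : EntNonneg A₁) (hA₂ : EntNonneg A₂)
    (hle : EntLE (A₁ * A₂) (A₁ * A₁)) :
    ∀ l : List (Matrix (Fin s) (Fin s) ℝ), (∀ M ∈ l, M = A₁ ∨ M = A₂) →
      ∃ a b : ℕ, a + b = l.length ∧ EntNonneg l.prod ∧ EntLE l.prod (A₂ ^ b * A₁ ^ a) := by
  intro l
  induction l with
  | nil =>
    intro _
    exact ⟨0, 0, rfl, by simpa using entNonneg_one, by simpa using entLE_refl _⟩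
  | cons M t ih =>
    intro hmem
    obtain ⟨a, b, hab, h0, hlt⟩ := ih fun X hX => hmem X (List.mem_cons_of_mem _ hX)
    have hM := hmem M List.mem_cons_self
    rcases hM with hM | hM
    · -- M = A₁
      refine ⟨a + b + 1, 0, by simp [← hab]; try omega, ?_, ?_⟩
      · rw [List.prod_cons, hM]
        exact entNonneg_mul hA₁ h0
      · rw [List.prod_cons, hM]
        have s1 : EntLE (A₁ * t.prod) (A₁ * (A₂ ^ b * A₁ ^ a)) :=
          entLE_mul hA₁ h0 (entLE_refl _) hlt
        have s2 : EntLE (A₁ * (A₂ ^ b * A₁ ^ a)) (A₁ ^ (b + 1) * A₁ ^ a) := by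
          rw [← mul_assoc]
          exact entLE_mul (entNonneg_mul hA₁ (entNonneg_pow hA₂ b)) (entNonneg_pow hA₁ a)
            (key_pow hA₁ hA₂ hle b) (entLE_refl _)
        refine entLE_trans (entLE_trans s1 s2) ?_
        rw [← pow_add]
        rw [show b + 1 + a = a + b + 1 by ring]
        intro i j
        simp [Matrix.one_mul]
    · -- M = A₂
      refine ⟨a, b + 1, by simp [← hab]; try omega, ?_, ?_⟩
      · rw [List.prod_cons, hM]
        exact entNonneg_mul hA₂ h0
      · rw [List.prod_cons, hM]
        have s1 : EntLE (A₂ * t.prod) (A₂ * (A₂ ^ b * A₁ ^ a)) :=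
          entLE_mul hA₂ h0 (entLE_refl _) hlt
        refine entLE_trans s1 ?_
        rw [← mul_assoc, ← pow_succ']
        exact entLE_refl _

end Comb
end JSRaux

open JSRaux

/-- If `A₁·A₂ ≤ A₁·A₁` entrywise for nonnegative-integer matrices then the pair
has the finiteness property. -/
theorem finiteness_property_of_mul_le {s : ℕ}
    (A₁ A₂ : Matrix (Fin s) (Fin s) ℝ)
    (h₁ : ∀ i j, ∃ k : ℕ, A₁ i j = k)
    (h₂ : ∀ i j, ∃ k : ℕ, A₂ i j = k)
    (hle : ∀ i j, (A₁ * A₂) i j ≤ (A₁ * A₁) i j) :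
    FinitenessProperty ![A₁, A₂] := by
  have hA₁0 : EntNonneg A₁ := fun i j => by obtain ⟨k, hk⟩ := h₁ i j; rw [hk]; positivity
  have hA₂0 : EntNonneg A₂ := fun i j => by obtain ⟨k, hk⟩ := h₂ i j; rw [hk]; positivity
  have hleE : EntLE (A₁ * A₂) (A₁ * A₁) := hle
  set A : Fin 2 → Matrix (Fin s) (Fin s) ℝ := ![A₁, A₂] with hA
  have hmem : ∀ j : Fin 2, A j = A₁ ∨ A j = A₂ := by
    intro j; fin_cases j
    · left; simp [hA]
    · right; simp [hA]
  have hnorm : ∀ B : Matrix (Fin s) (Fin s) ℝ, l2OpNorm B = ‖Tr B‖ := fun _ => rfl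
  have hsr : ∀ B : Matrix (Fin s) (Fin s) ℝ, specRad B = specRadAux B := fun _ => rfl
  set R : ℝ := max (specRad A₁) (specRad A₂) with hR
  have hR0 : 0 ≤ R := le_trans (by rw [hsr]; exact specRadAux_nonneg A₁) (le_max_left _ _)
  have hJSR_eq : JSR A = ⨅ n : {m : ℕ // 1 ≤ m}, ⨆ w : Fin (n : ℕ) → Fin 2,
      l2OpNorm (wordProd A w) ^ (1 / ((n : ℕ) : ℝ)) := rfl
  have word_bound : ∀ {n : ℕ} (w : Fin n → Fin 2),
      ∃ a b : ℕ, a + b = n ∧ l2OpNorm (wordProd A w) ≤ ‖Tr (A₂ ^ b)‖ * ‖Tr (A₁ ^ a)‖ := by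
    intro n w
    have hl : ∀ M ∈ (List.ofFn fun i => A (w i)).reverse, M = A₁ ∨ M = A₂ := by
      intro M hM
      rw [List.mem_reverse, List.mem_ofFn] at hM
      obtain ⟨i, rfl⟩ := hM
      exact hmem (w i)
    obtain ⟨a, b, hab, h0, hltP⟩ := list_prod_bound hA₁0 hA₂0 hleE _ hl
    refine ⟨a, b, by simpa using hab, ?_⟩
    have h1 : l2OpNorm (wordProd A w) ≤ ‖Tr (A₂ ^ b * A₁ ^ a)‖ := by
      rw [hnorm]
      exact opNorm_Tr_mono h0 hltP
    exact h1.trans (opNorm_Tr_mul_le _ _)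
  have word_const : ∀ (n : ℕ) (i : Fin 2), wordProd A (fun _ : Fin n => i) = A i ^ n := by
    intro n i
    unfold wordProd
    rw [List.ofFn_const, List.reverse_replicate, List.prod_replicate]
  have hbddb : BddBelow (Set.range fun n : {m : ℕ // 1 ≤ m} =>
      ⨆ w : Fin (n : ℕ) → Fin 2, l2OpNorm (wordProd A w) ^ (1 / ((n : ℕ) : ℝ))) := by
    refine ⟨0, ?_⟩
    rintro x ⟨n, rfl⟩
    exact Real.iSup_nonneg fun w => Real.rpow_nonneg (norm_nonneg _) _
  have lower : ∀ i : Fin 2, specRad (A i) ≤ JSR A := by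
    intro i
    rw [hJSR_eq]
    apply le_ciInf
    rintro ⟨n, hn⟩
    obtain ⟨m, rfl⟩ : ∃ m, n = m + 1 := ⟨n - 1, by omega⟩
    have h1 : specRad (A i)
        ≤ l2OpNorm (wordProd A (fun _ : Fin (m + 1) => i)) ^ (1 / ((m + 1 : ℕ) : ℝ)) := by
      rw [word_const, hnorm, hsr]
      exact specRad_le_opNorm_pow (A i) m
    refine h1.trans ?_
    show _ ≤ ⨆ w : Fin (m + 1) → Fin 2, l2OpNorm (wordProd A w) ^ (1 / ((m + 1 : ℕ) : ℝ))
    exact le_ciSup (f := fun w : Fin (m + 1) → Fin 2 =>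
      l2OpNorm (wordProd A w) ^ (1 / ((m + 1 : ℕ) : ℝ)))
      (Set.Finite.bddAbove (Set.finite_range _)) (fun _ => i)
  have hlowR : R ≤ JSR A := by
    rw [hR]
    refine max_le ?_ ?_
    · exact lower 0
    · exact lower 1
  have hupR : JSR A ≤ R := by
    apply le_of_forall_pos_le_add
    intro ε hε
    obtain ⟨C₁, hC₁1, hC₁⟩ := exists_pow_bound A₁ hε
    obtain ⟨C₂, hC₂1, hC₂⟩ := exists_pow_bound A₂ hε
    have hb : (0 : ℝ) < R + ε := by linarith
    have hpow1 : ∀ k, ‖Tr (A₁ ^ k)‖ ≤ C₁ * (R + ε) ^ k := by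
      intro k
      refine (hC₁ k).trans ?_
      have h1 : specRadAux A₁ + ε ≤ R + ε := by
        have : specRadAux A₁ ≤ R := by rw [hR, hsr]; exact le_max_left _ _
        linarith
      have h2 : (specRadAux A₁ + ε) ^ k ≤ (R + ε) ^ k :=
        pow_le_pow_left₀ (by have := specRadAux_nonneg A₁; linarith) h1 k
      exact mul_le_mul_of_nonneg_left h2 (by linarith)
    have hpow2 : ∀ k, ‖Tr (A₂ ^ k)‖ ≤ C₂ * (R + ε) ^ k := by
      intro k
      refine (hC₂ k).trans ?_
      have h1 : specRadAux A₂ + ε ≤ R + ε := by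
        have : specRadAux A₂ ≤ R := by rw [hR, hsr]; exact le_max_right _ _
        linarith
      have h2 : (specRadAux A₂ + ε) ^ k ≤ (R + ε) ^ k :=
        pow_le_pow_left₀ (by have := specRadAux_nonneg A₂; linarith) h1 k
      exact mul_le_mul_of_nonneg_left h2 (by linarith)
    have hCpos : (0 : ℝ) < C₁ * C₂ := by nlinarith
    have hterm : ∀ n : {m : ℕ // 1 ≤ m},
        (⨆ w : Fin (n : ℕ) → Fin 2, l2OpNorm (wordProd A w) ^ (1 / ((n : ℕ) : ℝ)))
          ≤ (C₁ * C₂) ^ (1 / ((n : ℕ) : ℝ)) * (R + ε) := by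
      rintro ⟨n, hn⟩
      apply ciSup_le
      intro w
      obtain ⟨a, b, hab, hWle⟩ := word_bound w
      have hW : l2OpNorm (wordProd A w) ≤ (C₁ * C₂) * (R + ε) ^ n := by
        refine hWle.trans ?_
        calc ‖Tr (A₂ ^ b)‖ * ‖Tr (A₁ ^ a)‖
            ≤ (C₂ * (R + ε) ^ b) * (C₁ * (R + ε) ^ a) :=
              mul_le_mul (hpow2 b) (hpow1 a) (norm_nonneg _)
                (by positivity)
          _ = (C₁ * C₂) * (R + ε) ^ (a + b) := by rw [pow_add]; ring
          _ = (C₁ * C₂) * (R + ε) ^ n := by rw [hab]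
      have hn0 : ((n : ℕ) : ℝ) ≠ 0 := by
        have : (0 : ℝ) < (n : ℝ) := by exact_mod_cast hn
        exact this.ne'
      have hWn := Real.rpow_le_rpow (by rw [hnorm]; exact norm_nonneg _) hW
        (by positivity : (0 : ℝ) ≤ 1 / (n : ℝ))
      refine hWn.trans (le_of_eq ?_)
      rw [Real.mul_rpow (le_of_lt hCpos) (by positivity)]
      congr 1
      rw [← Real.rpow_natCast (R + ε) n, ← Real.rpow_mul hb.le, mul_one_div,
        div_self hn0, Real.rpow_one]
    have hJ : ∀ n : {m : ℕ // 1 ≤ m}, JSR A ≤ (C₁ * C₂) ^ (1 / ((n : ℕ) : ℝ)) * (R + ε) := by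
      intro n
      rw [hJSR_eq]
      exact (ciInf_le hbddb n).trans (hterm n)
    have htend : Filter.Tendsto (fun n : ℕ => (C₁ * C₂) ^ (1 / (n : ℝ)) * (R + ε))
        Filter.atTop (𝓝 ((C₁ * C₂) ^ (0 : ℝ) * (R + ε))) := by
      apply Filter.Tendsto.mul_const
      have hcont : ContinuousAt (fun y : ℝ => (C₁ * C₂) ^ y) 0 := by
        have h2 := Real.continuousAt_rpow (C₁ * C₂, 0) (Or.inl hCpos.ne')
        exact h2.comp (Continuous.continuousAt
          (continuous_const.prodMk continuous_id))
      exact hcont.tendsto.comp tendsto_one_div_atTop_nhds_zero_nat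
    rw [Real.rpow_zero, one_mul] at htend
    refine ge_of_tendsto htend ?_
    rw [Filter.eventually_atTop]
    exact ⟨1, fun n hn => hJ ⟨n, hn⟩⟩
  have hJR : JSR A = R := le_antisymm hupR hlowR
  obtain ⟨i, hi⟩ : ∃ i : Fin 2, specRad (A i) = R := by
    rcases max_choice (specRad A₁) (specRad A₂) with hmax | hmax
    · exact ⟨0, by rw [hR, hmax]; rfl⟩
    · exact ⟨1, by rw [hR, hmax]; rfl⟩
  refine ⟨1, le_refl 1, fun _ => i, ?_⟩
  rw [show wordProd A (fun _ : Fin 1 => i) = A i ^ 1 from word_const 1 i, pow_one, hJR, ← hi]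
  norm_num
end

section
/- Let A₁, A₂ be real s×s matrices all of whose entries are nonnegative integers. If A₂ ≤ I entrywise, where I is the identity matrix, then the pair (A₁, A₂) has the finiteness property. -/
open Matrix

/- ============ Auxiliary development ============ -/

open Filter
open scoped Topology Matrix.Norms.L2Operator

section NormLemmas
variable {𝕜 : Type*} [RCLike 𝕜] {s : ℕ}

lemma euclid_coord_le (x : EuclideanSpace 𝕜 (Fin s)) (i : Fin s) : ‖x i‖ ≤ ‖x‖ := by
  rw [EuclideanSpace.norm_eq]
  rw [show ‖x i‖ = Real.sqrt (‖x i‖ ^ 2) from (Real.sqrt_sq (norm_nonneg _)).symm]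
  apply Real.sqrt_le_sqrt
  exact Finset.single_le_sum (f := fun j => ‖x j‖ ^ 2) (fun j _ => sq_nonneg _) (Finset.mem_univ i)

lemma euclid_norm_le_sum (x : EuclideanSpace 𝕜 (Fin s)) : ‖x‖ ≤ ∑ i, ‖x i‖ := by
  rw [EuclideanSpace.norm_eq]
  rw [show (∑ i, ‖x i‖) = Real.sqrt ((∑ i, ‖x i‖) ^ 2) from
    (Real.sqrt_sq (Finset.sum_nonneg fun i _ => norm_nonneg _)).symm]
  exact Real.sqrt_le_sqrt (Finset.sum_sq_le_sq_sum_of_nonneg fun i _ => norm_nonneg _)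

lemma matrix_entry_le_norm (M : Matrix (Fin s) (Fin s) 𝕜) (i j : Fin s) : ‖M i j‖ ≤ ‖M‖ := by
  have h := (toEuclideanCLM (𝕜 := 𝕜) M).le_opNorm (EuclideanSpace.single j (1 : 𝕜))
  rw [EuclideanSpace.norm_single, norm_one, mul_one] at h
  refine le_trans ?_ h
  have happ : toEuclideanCLM (𝕜 := 𝕜) M (EuclideanSpace.single j (1 : 𝕜))
      = (WithLp.equiv _ _).symm (M *ᵥ Pi.single j 1) := by
    rw [show (EuclideanSpace.single j (1:𝕜)) = (WithLp.equiv _ _).symm (Pi.single j 1) from rfl]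
    rfl
  rw [happ]
  have h2 := euclid_coord_le (𝕜 := 𝕜) ((WithLp.equiv 2 _).symm (M *ᵥ Pi.single j 1)) i
  refine le_trans ?_ h2
  have h3 : ((WithLp.equiv 2 (Fin s → 𝕜)).symm (M *ᵥ Pi.single j 1)) i = M i j := by
    show (M *ᵥ Pi.single j 1) i = M i j
    rw [mulVec_single]
    simp
  rw [h3]

lemma matrix_norm_le_sum (M : Matrix (Fin s) (Fin s) 𝕜) : ‖M‖ ≤ ∑ i, ∑ j, ‖M i j‖ := by
  rw [cstar_norm_def]
  apply ContinuousLinearMap.opNorm_le_bound _ (Finset.sum_nonneg fun i _ =>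
    Finset.sum_nonneg fun j _ => norm_nonneg _)
  intro x
  have happ : toEuclideanCLM (𝕜 := 𝕜) M x
      = (WithLp.equiv _ _).symm (M *ᵥ (WithLp.equiv _ _) x) := by
    rfl
  rw [happ]
  calc ‖(WithLp.equiv 2 (Fin s → 𝕜)).symm (M *ᵥ (WithLp.equiv _ _) x)‖
      ≤ ∑ i, ‖((WithLp.equiv 2 (Fin s → 𝕜)).symm (M *ᵥ (WithLp.equiv _ _) x)) i‖ :=
        euclid_norm_le_sum _
    _ ≤ ∑ i, (∑ j, ‖M i j‖) * ‖x‖ := by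
        apply Finset.sum_le_sum
        intro i _
        show ‖(M *ᵥ (WithLp.equiv _ _) x) i‖ ≤ _
        rw [mulVec, dotProduct]
        calc ‖∑ j, M i j * (WithLp.equiv _ _) x j‖ ≤ ∑ j, ‖M i j * (WithLp.equiv _ _) x j‖ :=
              norm_sum_le _ _
          _ ≤ ∑ j, ‖M i j‖ * ‖x‖ := by
              apply Finset.sum_le_sum
              intro j _
              rw [norm_mul]
              exact mul_le_mul_of_nonneg_left (euclid_coord_le x j) (norm_nonneg _)
          _ = (∑ j, ‖M i j‖) * ‖x‖ := by rw [Finset.sum_mul]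
    _ = (∑ i, ∑ j, ‖M i j‖) * ‖x‖ := by rw [Finset.sum_mul]

end NormLemmas

section RealNorm
variable {s : ℕ}

lemma l2OpNorm_eq_norm (M : Matrix (Fin s) (Fin s) ℝ) : l2OpNorm M = ‖M‖ := rfl

lemma l2OpNorm_nonneg (M : Matrix (Fin s) (Fin s) ℝ) : 0 ≤ l2OpNorm M :=
  norm_nonneg _

lemma l2OpNorm_mul_le (M N : Matrix (Fin s) (Fin s) ℝ) :
    l2OpNorm (M * N) ≤ l2OpNorm M * l2OpNorm N := by
  rw [l2OpNorm_eq_norm, l2OpNorm_eq_norm, l2OpNorm_eq_norm]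
  exact norm_mul_le M N

lemma l2OpNorm_zero : l2OpNorm (0 : Matrix (Fin s) (Fin s) ℝ) = 0 := by
  rw [l2OpNorm_eq_norm, norm_zero]

lemma abs_entry_le_l2OpNorm (M : Matrix (Fin s) (Fin s) ℝ) (i j : Fin s) :
    |M i j| ≤ l2OpNorm M := by
  rw [l2OpNorm_eq_norm, ← Real.norm_eq_abs]
  exact matrix_entry_le_norm M i j

lemma l2OpNorm_le_sum_abs (M : Matrix (Fin s) (Fin s) ℝ) :
    l2OpNorm M ≤ ∑ i, ∑ j, |M i j| := by
  rw [l2OpNorm_eq_norm]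
  refine le_trans (matrix_norm_le_sum M) (le_of_eq ?_)
  exact Finset.sum_congr rfl fun i _ => Finset.sum_congr rfl fun j _ => Real.norm_eq_abs _

end RealNorm

section Spectral
variable {s : ℕ}

lemma map_ofReal_pow (M : Matrix (Fin s) (Fin s) ℝ) (j : ℕ) :
    (M.map (Complex.ofReal : ℝ → ℂ)) ^ j = (M ^ j).map (Complex.ofReal : ℝ → ℂ) := by
  have h : ∀ N : Matrix (Fin s) (Fin s) ℝ,
      N.map (Complex.ofReal : ℝ → ℂ) = Complex.ofRealHom.mapMatrix N := fun N => rfl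
  rw [h, h, ← map_pow]

lemma norm_map_entry (M : Matrix (Fin s) (Fin s) ℝ) (i j : Fin s) :
    ‖(M.map (Complex.ofReal : ℝ → ℂ)) i j‖ = |M i j| := by
  simp [Matrix.map_apply, Complex.norm_real]

lemma specRad_netop (M : Matrix (Fin s) (Fin s) ℝ) :
    spectralRadius ℂ (M.map (Complex.ofReal : ℝ → ℂ)) ≠ ⊤ := by
  set a := M.map (Complex.ofReal : ℝ → ℂ)
  have h := spectrum.spectralRadius_le_pow_nnnorm_pow_one_div ℂ a 0
  intro htop
  rw [htop] at h
  simp only [Nat.cast_zero, zero_add, div_one] at h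
  have h2 : ((‖a ^ 1‖₊ : ENNReal) ^ (1:ℝ)) *
      ((‖(1 : Matrix (Fin s) (Fin s) ℂ)‖₊ : ENNReal) ^ (1:ℝ)) ≠ ⊤ := by
    apply ENNReal.mul_ne_top <;> simp
  exact h2 (top_le_iff.mp h)

lemma spec1 (M : Matrix (Fin s) (Fin s) ℝ) {m : ℕ} (hm : 1 ≤ m) (hs : 0 < s) {c : ℝ}
    (h : ∑ i, ∑ j, |(M ^ m) i j| ≤ c) : specRad M ≤ c ^ (1 / (m : ℝ)) := by
  haveI : Nonempty (Fin s) := ⟨⟨0, hs⟩⟩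
  have hc : 0 ≤ c := le_trans (Finset.sum_nonneg fun i _ =>
    Finset.sum_nonneg fun j _ => abs_nonneg _) h
  set a := M.map (Complex.ofReal : ℝ → ℂ) with ha
  obtain ⟨n, rfl⟩ : ∃ n, m = n + 1 := ⟨m - 1, by omega⟩
  have hone : ‖(1 : Matrix (Fin s) (Fin s) ℂ)‖₊ = 1 := by
    have h1 : ‖(1 : Matrix (Fin s) (Fin s) ℂ)‖ = 1 := by
      rw [cstar_norm_def, _root_.map_one]
      haveI : Nontrivial (EuclideanSpace ℂ (Fin s)) := by
        refine ⟨0, EuclideanSpace.single ⟨0, hs⟩ 1, fun hcontra => ?_⟩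
        have := congr_arg (fun v : EuclideanSpace ℂ (Fin s) => v ⟨0, hs⟩) hcontra
        simpa using this
      exact norm_one
    exact NNReal.coe_injective (by simpa using h1)
  have hb := spectrum.spectralRadius_le_pow_nnnorm_pow_one_div ℂ a n
  rw [hone] at hb
  simp only [ENNReal.coe_one, ENNReal.one_rpow, mul_one] at hb
  have hnorm : ‖a ^ (n+1)‖ ≤ c := by
    rw [ha, map_ofReal_pow]
    refine le_trans (matrix_norm_le_sum _) ?_
    refine le_trans (le_of_eq ?_) h
    exact Finset.sum_congr rfl fun i _ => Finset.sum_congr rfl fun j _ => norm_map_entry _ _ _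
  have hnn : (‖a ^ (n+1)‖₊ : ENNReal) ≤ ENNReal.ofReal c := by
    rw [← ENNReal.ofReal_coe_nnreal]
    exact ENNReal.ofReal_le_ofReal (by simpa using hnorm)
  have hb2 : spectralRadius ℂ a ≤ (ENNReal.ofReal c) ^ (1 / ((n:ℝ) + 1)) :=
    le_trans hb (ENNReal.rpow_le_rpow hnn (by positivity))
  have hcast : ((n : ℝ) + 1) = ((n + 1 : ℕ) : ℝ) := by push_cast; ring
  rw [hcast] at hb2
  calc specRad M = (spectralRadius ℂ a).toReal := rfl
    _ ≤ ((ENNReal.ofReal c) ^ (1 / ((n + 1 : ℕ) : ℝ))).toReal :=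
        ENNReal.toReal_mono (by
          rw [ENNReal.ofReal_rpow_of_nonneg hc (by positivity)]
          exact ENNReal.ofReal_ne_top) hb2
    _ = c ^ (1 / ((n + 1 : ℕ) : ℝ)) := by
        rw [ENNReal.ofReal_rpow_of_nonneg hc (by positivity)]
        exact ENNReal.toReal_ofReal (by positivity)

lemma spec2 (M : Matrix (Fin s) (Fin s) ℝ)
    (h : ∀ j : ℕ, 1 ≤ j → ∃ i k, 1 ≤ (M ^ j) i k) : 1 ≤ specRad M := by
  set a := M.map (Complex.ofReal : ℝ → ℂ) with ha
  have ht := spectrum.pow_nnnorm_pow_one_div_tendsto_nhds_spectralRadius a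
  have hev : ∀ᶠ j : ℕ in atTop, (1:ENNReal) ≤ (‖a ^ j‖₊ : ENNReal) ^ (1/(j:ℝ)) := by
    filter_upwards [eventually_ge_atTop 1] with j hj
    obtain ⟨i, k, hik⟩ := h j hj
    have h1 : (1:ℝ) ≤ ‖a ^ j‖ := by
      rw [ha, map_ofReal_pow]
      refine le_trans ?_ (matrix_entry_le_norm _ i k)
      rw [norm_map_entry]
      exact le_trans hik (le_abs_self _)
    have h2 : (1:ENNReal) ≤ (‖a ^ j‖₊ : ENNReal) := by
      rw [← ENNReal.coe_one, ENNReal.coe_le_coe, ← NNReal.coe_le_coe]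
      simpa using h1
    calc (1:ENNReal) = 1 ^ (1/(j:ℝ)) := (ENNReal.one_rpow _).symm
      _ ≤ _ := ENNReal.rpow_le_rpow h2 (by positivity)
  have hge : (1:ENNReal) ≤ spectralRadius ℂ a := ge_of_tendsto ht hev
  have := ENNReal.toReal_mono (specRad_netop M) hge
  simpa [specRad] using this

lemma spec3 (M : Matrix (Fin s) (Fin s) ℝ) {r' : ℝ} (hρ : specRad M < r') (hr0 : 0 < r') :
    ∃ K : ℝ, 1 ≤ K ∧ ∀ (k : ℕ) (i j : Fin s), |(M ^ k) i j| ≤ K * r' ^ k := by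
  set a := M.map (Complex.ofReal : ℝ → ℂ) with ha
  have ht := spectrum.pow_nnnorm_pow_one_div_tendsto_nhds_spectralRadius a
  have hlt : spectralRadius ℂ a < ENNReal.ofReal r' := by
    rw [← ENNReal.ofReal_toReal (specRad_netop M)]
    exact (ENNReal.ofReal_lt_ofReal_iff hr0).mpr hρ
  have hev : ∀ᶠ j : ℕ in atTop, (‖a ^ j‖₊ : ENNReal) ^ (1/(j:ℝ)) < ENNReal.ofReal r' :=
    ht.eventually_lt_const hlt
  obtain ⟨N, hN⟩ := eventually_atTop.mp hev
  set N₀ := max N 1 with hN₀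
  have hbig : ∀ k : ℕ, N₀ ≤ k → ∀ i j, |(M ^ k) i j| ≤ r' ^ k := by
    intro k hk i j
    have hk1 : 1 ≤ k := le_trans (le_max_right N 1) hk
    have hkN : N ≤ k := le_trans (le_max_left N 1) hk
    have h1 : (‖a ^ k‖₊ : ENNReal) ≤ (ENNReal.ofReal r') ^ (k:ℝ) := by
      have h2 := ENNReal.rpow_le_rpow (le_of_lt (hN k hkN)) (le_of_lt (by positivity :
        (0:ℝ) < (k:ℝ)))
      rw [← ENNReal.rpow_mul] at h2
      rw [show (1/(k:ℝ)) * (k:ℝ) = 1 by field_simp] at h2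
      rwa [ENNReal.rpow_one] at h2
    have h3 : (‖a ^ k‖₊ : ENNReal) ≤ ENNReal.ofReal (r' ^ k) := by
      rw [← Real.rpow_natCast r' k, ← ENNReal.ofReal_rpow_of_pos hr0]
      exact h1
    have h4 : ‖a ^ k‖ ≤ r' ^ k := by
      have := ENNReal.toReal_mono ENNReal.ofReal_ne_top h3
      rwa [ENNReal.coe_toReal, coe_nnnorm, ENNReal.toReal_ofReal (by positivity)] at this
    refine le_trans ?_ h4
    rw [ha, map_ofReal_pow]
    refine le_trans (le_of_eq (norm_map_entry _ i j).symm) (matrix_entry_le_norm _ i j)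
  set S : ℝ := ∑ j ∈ Finset.range N₀, (∑ i, ∑ k, |(M ^ j) i k|) / r' ^ j with hSdef
  have hS0 : 0 ≤ S := Finset.sum_nonneg fun j _ => div_nonneg
    (Finset.sum_nonneg fun i _ => Finset.sum_nonneg fun k _ => abs_nonneg _) (by positivity)
  refine ⟨1 + S, by linarith, ?_⟩
  intro k i j
  have hrk : (0:ℝ) < r' ^ k := by positivity
  rcases le_or_gt N₀ k with hk | hk
  · refine le_trans (hbig k hk i j) ?_
    nlinarith
  · have hmem : k ∈ Finset.range N₀ := Finset.mem_range.mpr hk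
    have hterm : (∑ i, ∑ k', |(M ^ k) i k'|) / r' ^ k ≤ S :=
      Finset.single_le_sum (f := fun j => (∑ i, ∑ k', |(M ^ j) i k'|) / r' ^ j)
        (fun j _ => div_nonneg (Finset.sum_nonneg fun i _ =>
          Finset.sum_nonneg fun k _ => abs_nonneg _) (by positivity)) hmem
    have hentry : |(M ^ k) i j| ≤ ∑ i', ∑ k', |(M ^ k) i' k'| := by
      calc |(M ^ k) i j| ≤ ∑ k', |(M ^ k) i k'| :=
            Finset.single_le_sum (f := fun k' => |(M ^ k) i k'|)
              (fun _ _ => abs_nonneg _) (Finset.mem_univ j)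
        _ ≤ ∑ i', ∑ k', |(M ^ k) i' k'| :=
            Finset.single_le_sum (f := fun i' => ∑ k', |(M ^ k) i' k'|)
              (fun _ _ => Finset.sum_nonneg fun _ _ => abs_nonneg _) (Finset.mem_univ i)
    have hX : (∑ i', ∑ k', |(M ^ k) i' k'|) ≤ S * r' ^ k := (div_le_iff₀ hrk).mp hterm
    nlinarith

lemma tendsto_rpow_one_div_nat (x : ℝ) (hx : 0 < x) :
    Tendsto (fun k : ℕ => x ^ (1/(k:ℝ))) atTop (𝓝 1) := by
  have hfun : (fun k : ℕ => x ^ (1/(k:ℝ))) = fun k : ℕ => Real.exp (Real.log x * (1/(k:ℝ))) := by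
    funext k
    rw [Real.rpow_def_of_pos hx]
  rw [hfun]
  have hT : Tendsto (fun k : ℕ => Real.log x * (1/(k:ℝ))) atTop (𝓝 (Real.log x * 0)) :=
    tendsto_const_nhds.mul tendsto_one_div_atTop_nhds_zero_nat
  have := (Real.continuous_exp.tendsto _).comp hT
  simpa [Function.comp_def] using this

end Spectral

section WordLemmas
variable {s J : ℕ} (A : Fin J → Matrix (Fin s) (Fin s) ℝ)

lemma wordProd_zero (w : Fin 0 → Fin J) : wordProd A w = 1 := by
  simp [wordProd]

lemma wordProd_zero' {n : ℕ} (h : n = 0) (w : Fin n → Fin J) : wordProd A w = 1 := by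
  subst h; exact wordProd_zero A w

lemma wordProd_one' (w : Fin 1 → Fin J) : wordProd A w = A (w 0) := by
  simp [wordProd]

lemma wordProd_succ {n : ℕ} (w : Fin (n + 1) → Fin J) :
    wordProd A w = A (w (Fin.last n)) * wordProd A (fun i => w i.castSucc) := by
  rw [wordProd, wordProd, List.ofFn_succ' (fun i => A (w i)), List.concat_eq_append,
    List.reverse_append]
  simp

lemma wordProd_succ_left {n : ℕ} (w : Fin (n + 1) → Fin J) :
    wordProd A w = wordProd A (fun i => w i.succ) * A (w 0) := by
  rw [wordProd, wordProd, List.ofFn_succ (f := fun i => A (w i)), List.reverse_cons]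
  simp

lemma wordProd_append {n m : ℕ} (u : Fin n → Fin J) (v : Fin m → Fin J) :
    wordProd A (Fin.append u v) = wordProd A v * wordProd A u := by
  rw [wordProd, wordProd, wordProd]
  rw [show (List.ofFn fun i => A (Fin.append u v i))
      = List.ofFn (Fin.append (fun i => A (u i)) (fun i => A (v i))) from by
    congr 1; funext i
    refine Fin.addCases (fun i => ?_) (fun i => ?_) i <;>
      simp [Fin.append_left, Fin.append_right]]
  rw [List.ofFn_fin_append, List.reverse_append, List.prod_append]

lemma wordProd_cast {n m : ℕ} (h : n = m) (w : Fin m → Fin J) :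
    wordProd A (fun i : Fin n => w (Fin.cast h i)) = wordProd A w := by
  subst h; simp

lemma wordProd_const {n : ℕ} (j : Fin J) :
    wordProd A (fun _ : Fin n => j) = A j ^ n := by
  induction n with
  | zero => simp [wordProd_zero]
  | succ n ih =>
      rw [wordProd_succ]
      simp only [ih]
      rw [pow_succ']

lemma wordProd_pow {m : ℕ} (w : Fin m → Fin J) (k : ℕ) :
    ∃ w' : Fin (k * m) → Fin J, wordProd A w' = (wordProd A w) ^ k := by
  induction k with
  | zero => exact ⟨fun i => (Fin.cast (by ring) i : Fin 0).elim0,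
      by rw [pow_zero]; exact wordProd_zero' A (by ring) _⟩
  | succ k ih =>
      obtain ⟨w', hw'⟩ := ih
      refine ⟨fun i => Fin.append w' w (Fin.cast (by ring) i), ?_⟩
      rw [wordProd_cast A (by ring : (k+1)*m = k*m + m) (Fin.append w' w),
        wordProd_append, hw', pow_succ']

lemma fin_append_self {n m : ℕ} (w : Fin (n + m) → Fin J) :
    w = Fin.append (fun i => w (Fin.castAdd m i)) (fun i => w (Fin.natAdd n i)) := by
  funext i
  refine Fin.addCases (fun i => ?_) (fun i => ?_) i
  · rw [Fin.append_left]
  · rw [Fin.append_right]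

end WordLemmas

section NatMat
variable {s J : ℕ}

def IsNatMat {s : ℕ} (M : Matrix (Fin s) (Fin s) ℝ) : Prop := ∀ i j, ∃ k : ℕ, M i j = k

lemma IsNatMat.nonneg {M : Matrix (Fin s) (Fin s) ℝ} (h : IsNatMat M) (i j : Fin s) :
    0 ≤ M i j := by
  obtain ⟨k, hk⟩ := h i j; rw [hk]; positivity

lemma IsNatMat.one_le {M : Matrix (Fin s) (Fin s) ℝ} (h : IsNatMat M) {i j : Fin s}
    (hne : M i j ≠ 0) : 1 ≤ M i j := by
  obtain ⟨k, hk⟩ := h i j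
  rw [hk] at hne ⊢
  exact_mod_cast Nat.one_le_iff_ne_zero.mpr (by exact_mod_cast fun h0 => hne (by simp [h0]))

lemma IsNatMat.one : IsNatMat (1 : Matrix (Fin s) (Fin s) ℝ) := by
  intro i j
  by_cases h : i = j
  · exact ⟨1, by subst h; simp⟩
  · exact ⟨0, by simp [one_apply_ne h]⟩

lemma IsNatMat.mul {M N : Matrix (Fin s) (Fin s) ℝ} (hM : IsNatMat M) (hN : IsNatMat N) :
    IsNatMat (M * N) := by
  intro i j
  have ha : ∀ k, M i k = ((hM i k).choose : ℝ) := fun k => (hM i k).choose_spec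
  have hb : ∀ k, N k j = ((hN k j).choose : ℝ) := fun k => (hN k j).choose_spec
  refine ⟨∑ k, (hM i k).choose * (hN k j).choose, ?_⟩
  rw [mul_apply]
  push_cast
  simp only [← ha, ← hb]

lemma IsNatMat.pow {M : Matrix (Fin s) (Fin s) ℝ} (hM : IsNatMat M) (c : ℕ) :
    IsNatMat (M ^ c) := by
  induction c with
  | zero => simpa using IsNatMat.one
  | succ c ih => rw [pow_succ]; exact ih.mul hM

lemma IsNatMat.wordProd {A : Fin J → Matrix (Fin s) (Fin s) ℝ}
    (hA : ∀ t, IsNatMat (A t)) {n : ℕ} (w : Fin n → Fin J) : IsNatMat (wordProd A w) := by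
  induction n with
  | zero => rw [wordProd_zero]; exact IsNatMat.one
  | succ n ih => rw [wordProd_succ]; exact (hA _).mul (ih _)

end NatMat

section Paths
variable {s J : ℕ} {A : Fin J → Matrix (Fin s) (Fin s) ℝ}

lemma wordProd_nonneg (hA : ∀ t, IsNatMat (A t)) {n : ℕ} (w : Fin n → Fin J) (i j : Fin s) :
    0 ≤ wordProd A w i j :=
  (IsNatMat.wordProd hA w).nonneg i j

lemma exists_path (hA : ∀ t, IsNatMat (A t)) {n : ℕ} (w : Fin n → Fin J) (i j : Fin s)
    (h : wordProd A w i j ≠ 0) :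
    ∃ p : Fin (n + 1) → Fin s, p (Fin.last n) = i ∧ p 0 = j ∧
      ∀ t : Fin n, A (w t) (p t.succ) (p t.castSucc) ≠ 0 := by
  clear hA
  induction n generalizing i j with
  | zero =>
      rw [wordProd_zero] at h
      have hij : i = j := by
        by_contra hne
        exact h (one_apply_ne hne)
      exact ⟨fun _ => i, rfl, hij, fun t => t.elim0⟩
  | succ n ih =>
      rw [wordProd_succ, mul_apply] at h
      obtain ⟨k, -, hk⟩ := Finset.exists_ne_zero_of_sum_ne_zero h
      have h1 : A (w (Fin.last n)) i k ≠ 0 := left_ne_zero_of_mul hk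
      have h2 : wordProd A (fun i => w i.castSucc) k j ≠ 0 := right_ne_zero_of_mul hk
      obtain ⟨p', hlast, h0, hstep⟩ := ih (fun i => w i.castSucc) k j h2
      refine ⟨Fin.snoc p' i, ?_, ?_, ?_⟩
      · simp [Fin.snoc_last]
      · rw [show (0 : Fin (n + 2)) = Fin.castSucc 0 by simp, Fin.snoc_castSucc]
        exact h0
      · intro t
        refine Fin.lastCases ?_ ?_ t
        · rw [show (Fin.last n).succ = Fin.last (n + 1) by rfl, Fin.snoc_last,
            show (Fin.last n).castSucc = Fin.castSucc (Fin.last n) by rfl, Fin.snoc_castSucc,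
            hlast]
          exact h1
        · intro t'
          rw [show (t'.castSucc).succ = Fin.castSucc t'.succ from (Fin.succ_castSucc t').symm,
            Fin.snoc_castSucc, show (t'.castSucc).castSucc = Fin.castSucc t'.castSucc from rfl,
            Fin.snoc_castSucc]
          exact hstep t'

lemma path_entry_ne_zero (hA : ∀ t, IsNatMat (A t)) {n : ℕ} (w : Fin n → Fin J)
    (p : Fin (n + 1) → Fin s) (h : ∀ t : Fin n, A (w t) (p t.succ) (p t.castSucc) ≠ 0) :
    wordProd A w (p (Fin.last n)) (p 0) ≠ 0 := by
  induction n with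
  | zero =>
      rw [wordProd_zero, show Fin.last 0 = 0 from rfl, one_apply_eq]
      exact one_ne_zero
  | succ n ih =>
      have h2 : wordProd A (fun i => w i.castSucc) (p (Fin.castSucc (Fin.last n))) (p 0) ≠ 0 := by
        have := ih (fun i => w i.castSucc) (fun i => p i.castSucc) (fun t => by
          simpa only [Fin.succ_castSucc] using h t.castSucc)
        simpa using this
      rw [wordProd_succ, mul_apply]
      have hpos : ∀ k ∈ Finset.univ, (0:ℝ) ≤ A (w (Fin.last n)) (p (Fin.last (n+1))) k *
          wordProd A (fun i => w i.castSucc) k (p 0) :=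
        fun k _ => mul_nonneg ((hA _).nonneg _ _) (wordProd_nonneg hA _ _ _)
      have hterm : (0:ℝ) < A (w (Fin.last n)) (p (Fin.last (n+1))) (p (Fin.castSucc (Fin.last n))) *
          wordProd A (fun i => w i.castSucc) (p (Fin.castSucc (Fin.last n))) (p 0) := by
        apply lt_of_le_of_ne (hpos _ (Finset.mem_univ _))
        symm
        apply mul_ne_zero _ h2
        have := h (Fin.last n)
        rwa [show (Fin.last n).succ = Fin.last (n+1) from rfl] at this
      have hsum : (0:ℝ) < ∑ k, A (w (Fin.last n)) (p (Fin.last (n+1))) k *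
          wordProd A (fun i => w i.castSucc) k (p 0) :=
        lt_of_lt_of_le hterm (Finset.single_le_sum hpos (Finset.mem_univ _))
      exact ne_of_gt hsum

end Paths

section Domination
variable {s : ℕ} {A₁ A₂ : Matrix (Fin s) (Fin s) ℝ}

lemma fin_two_cases (i : Fin 2) : i = 0 ∨ i = 1 := by omega

lemma word_dominated (hn1 : IsNatMat A₁)
    (hnw : ∀ t, IsNatMat ((![A₁, A₂]) t))
    (hle : ∀ i j, A₂ i j ≤ (1 : Matrix (Fin s) (Fin s) ℝ) i j)
    {m : ℕ} (w : Fin m → Fin 2) :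
    ∃ c ≤ m, ∀ i j, wordProd ![A₁, A₂] w i j ≤ (A₁ ^ c) i j := by
  induction m with
  | zero =>
      exact ⟨0, le_refl 0, fun i j => by rw [wordProd_zero, pow_zero]⟩
  | succ m ih =>
      obtain ⟨c, hc, hbound⟩ := ih (fun i => w i.succ)
      rcases fin_two_cases (w 0) with h0 | h0
      · refine ⟨c + 1, by omega, fun i j => ?_⟩
        rw [wordProd_succ_left, h0, mul_apply]
        rw [show (![A₁, A₂]) 0 = A₁ from rfl, pow_succ, mul_apply]
        apply Finset.sum_le_sum
        intro k _
        exact mul_le_mul_of_nonneg_right (hbound i k) (hn1.nonneg k j)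
      · refine ⟨c, by omega, fun i j => ?_⟩
        rw [wordProd_succ_left, h0, mul_apply]
        rw [show (![A₁, A₂]) 1 = A₂ from rfl]
        calc ∑ k, wordProd ![A₁, A₂] (fun i => w i.succ) i k * A₂ k j
            ≤ ∑ k, (A₁ ^ c) i k * (1 : Matrix (Fin s) (Fin s) ℝ) k j := by
              apply Finset.sum_le_sum
              intro k _
              exact mul_le_mul (hbound i k) (hle k j)
                ((hnw 1).nonneg k j) ((hn1.pow c).nonneg i k)
          _ = (A₁ ^ c) i j := by rw [← mul_apply, mul_one]

lemma diag_pow_ge_one (hn : IsNatMat A₁) {k : Fin s} (hk : 1 ≤ A₁ k k) (j : ℕ) :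
    1 ≤ (A₁ ^ j) k k := by
  induction j with
  | zero => simp
  | succ j ih =>
      rw [pow_succ, mul_apply]
      calc (1:ℝ) = 1 * 1 := by ring
        _ ≤ (A₁ ^ j) k k * A₁ k k := mul_le_mul ih hk zero_le_one (le_trans zero_le_one ih)
        _ ≤ ∑ l, (A₁ ^ j) k l * A₁ l k :=
            Finset.single_le_sum (f := fun l => (A₁ ^ j) k l * A₁ l k)
              (fun l _ => mul_nonneg ((hn.pow j).nonneg _ _) (hn.nonneg _ _))
              (Finset.mem_univ k)

end Domination

lemma sum_const_fin (s : ℕ) (c : ℝ) : ∑ _i : Fin s, ∑ _j : Fin s, c = (s:ℝ) * (s:ℝ) * c := by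
  simp only [Finset.sum_const, Finset.card_univ, Fintype.card_fin, nsmul_eq_mul]
  ring

section JSRLemmas
variable {s : ℕ} (A₁ A₂ : Matrix (Fin s) (Fin s) ℝ)

/-- Sup of the operator norms over all words of length `n`. -/
noncomputable def Snorm (n : ℕ) : ℝ :=
  ⨆ w : Fin n → Fin 2, l2OpNorm (wordProd ![A₁, A₂] w)

lemma Snorm_nonneg (n : ℕ) : 0 ≤ Snorm A₁ A₂ n :=
  Real.iSup_nonneg fun w => l2OpNorm_nonneg _

lemma le_Snorm {n : ℕ} (w : Fin n → Fin 2) :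
    l2OpNorm (wordProd ![A₁, A₂] w) ≤ Snorm A₁ A₂ n :=
  le_ciSup (f := fun w : Fin n → Fin 2 => l2OpNorm (wordProd ![A₁, A₂] w))
    (Set.Finite.bddAbove (Set.finite_range _)) w

lemma Snorm_attained (n : ℕ) : ∃ w : Fin n → Fin 2,
    Snorm A₁ A₂ n = l2OpNorm (wordProd ![A₁, A₂] w) := by
  obtain ⟨w0, hw0⟩ := Finite.exists_max (fun w : Fin n → Fin 2 => l2OpNorm (wordProd ![A₁, A₂] w))
  exact ⟨w0, le_antisymm (ciSup_le hw0) (le_Snorm A₁ A₂ w0)⟩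

lemma Snorm_add_le (n m : ℕ) : Snorm A₁ A₂ (n + m) ≤ Snorm A₁ A₂ n * Snorm A₁ A₂ m := by
  apply ciSup_le
  intro w
  rw [fin_append_self w, wordProd_append]
  refine le_trans (l2OpNorm_mul_le _ _) ?_
  rw [mul_comm (Snorm A₁ A₂ n)]
  exact mul_le_mul (le_Snorm A₁ A₂ _) (le_Snorm A₁ A₂ _) (l2OpNorm_nonneg _)
    (Snorm_nonneg A₁ A₂ m)

lemma Snorm_pow {n : ℕ} (k : ℕ) (hk : 1 ≤ k) :
    Snorm A₁ A₂ (k * n) ≤ (Snorm A₁ A₂ n) ^ k := by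
  induction k with
  | zero => omega
  | succ k ih =>
      rcases Nat.eq_or_lt_of_le hk with h1 | h1
      · rw [← h1, one_mul, pow_one]
      · have hk1 : 1 ≤ k := by omega
        rw [show (k+1)*n = k*n + n by ring, pow_succ]
        refine le_trans (Snorm_add_le A₁ A₂ (k*n) n) ?_
        exact mul_le_mul_of_nonneg_right (ih hk1) (Snorm_nonneg A₁ A₂ n)

lemma iSup_rpow_eq {n : ℕ} (hn : 1 ≤ n) :
    (⨆ w : Fin n → Fin 2, l2OpNorm (wordProd ![A₁, A₂] w) ^ (1 / (n:ℝ)))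
      = (Snorm A₁ A₂ n) ^ (1 / (n:ℝ)) := by
  apply le_antisymm
  · apply ciSup_le
    intro w
    exact Real.rpow_le_rpow (l2OpNorm_nonneg _) (le_Snorm A₁ A₂ w) (by positivity)
  · obtain ⟨w0, hw0⟩ := Snorm_attained A₁ A₂ n
    rw [hw0]
    exact le_ciSup (f := fun w : Fin n → Fin 2 => l2OpNorm (wordProd ![A₁, A₂] w) ^ (1 / (n:ℝ)))
      (Set.Finite.bddAbove (Set.finite_range _)) w0

lemma JSR_le_T {n : ℕ} (hn : 1 ≤ n) :
    JSR ![A₁, A₂] ≤ (Snorm A₁ A₂ n) ^ (1 / (n:ℝ)) := by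
  rw [← iSup_rpow_eq A₁ A₂ hn]
  exact ciInf_le ⟨0, by
    rintro x ⟨⟨m, hm⟩, rfl⟩
    exact Real.iSup_nonneg fun w => Real.rpow_nonneg (l2OpNorm_nonneg _) _⟩
    (⟨n, hn⟩ : {m : ℕ // 1 ≤ m})

lemma le_JSR {c : ℝ} (h : ∀ n : ℕ, 1 ≤ n → c ≤ (Snorm A₁ A₂ n) ^ (1 / (n:ℝ))) :
    c ≤ JSR ![A₁, A₂] := by
  apply le_ciInf
  rintro ⟨n, hn⟩
  rw [iSup_rpow_eq A₁ A₂ hn]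
  exact h n hn

end JSRLemmas

/-- If `A₂ ≤ I` entrywise for nonnegative-integer matrices then the pair has
the finiteness property. -/
theorem finiteness_property_of_le_one {s : ℕ}
    (A₁ A₂ : Matrix (Fin s) (Fin s) ℝ)
    (h₁ : ∀ i j, ∃ k : ℕ, A₁ i j = k)
    (h₂ : ∀ i j, ∃ k : ℕ, A₂ i j = k)
    (hle : ∀ i j, A₂ i j ≤ (1 : Matrix (Fin s) (Fin s) ℝ) i j) :
    FinitenessProperty ![A₁, A₂] := by
  classical
  have hnat : ∀ t : Fin 2, IsNatMat ((![A₁, A₂]) t) := by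
    intro t
    rcases fin_two_cases t with h | h <;> subst h
    · exact h₁
    · exact h₂
  by_cases hzero : ∃ n, 1 ≤ n ∧ ∀ w : Fin n → Fin 2, wordProd ![A₁, A₂] w = 0
  · -- JSR = 0, witnessed by any word of that length
    obtain ⟨n, hn, hw⟩ := hzero
    have hinv : (1 / (n:ℝ)) ≠ 0 :=
      one_div_ne_zero (Nat.cast_ne_zero.mpr (by omega))
    have hSn : Snorm A₁ A₂ n = 0 := by
      apply le_antisymm _ (Snorm_nonneg A₁ A₂ n)
      apply ciSup_le
      intro w
      rw [hw w, l2OpNorm_zero]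
    have hJ0 : JSR ![A₁, A₂] = 0 := by
      apply le_antisymm
      · have := JSR_le_T A₁ A₂ hn
        rwa [hSn, Real.zero_rpow hinv] at this
      · exact le_JSR A₁ A₂ fun m hm => Real.rpow_nonneg (Snorm_nonneg A₁ A₂ m) _
    refine ⟨n, hn, fun _ => 0, ?_⟩
    rw [hw _, hJ0]
    have : specRad (0 : Matrix (Fin s) (Fin s) ℝ) = 0 := by
      rw [specRad, show ((0 : Matrix (Fin s) (Fin s) ℝ)).map (Complex.ofReal : ℝ → ℂ) = 0 from by
        ext i j; simp, spectrum.spectralRadius_zero]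
      rfl
    rw [this, Real.zero_rpow hinv]
  · push_neg at hzero
    have hs : 0 < s := by
      by_contra hs0
      obtain ⟨w, hwne⟩ := hzero 1 le_rfl
      apply hwne
      apply Matrix.ext
      intro i
      exact absurd i.isLt (by omega)
    -- JSR ≥ 1
    have hJ1 : 1 ≤ JSR ![A₁, A₂] := by
      apply le_JSR
      intro n hn
      obtain ⟨w, hwne⟩ := hzero n hn
      have hentry : ∃ i j, wordProd ![A₁, A₂] w i j ≠ 0 := by
        by_contra hc
        push_neg at hc
        exact hwne (Matrix.ext fun i j => hc i j)
      obtain ⟨i, j, hij⟩ := hentry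
      have h1 : 1 ≤ l2OpNorm (wordProd ![A₁, A₂] w) :=
        le_trans (le_trans ((IsNatMat.wordProd hnat w).one_le hij) (le_abs_self _))
          (abs_entry_le_l2OpNorm _ i j)
      have h2 : 1 ≤ Snorm A₁ A₂ n := le_trans h1 (le_Snorm A₁ A₂ w)
      calc (1:ℝ) = 1 ^ (1/(n:ℝ)) := (Real.one_rpow _).symm
        _ ≤ _ := Real.rpow_le_rpow zero_le_one h2 (by positivity)
    -- upper bound: JSR ≤ max 1 (specRad A₁)
    set r := max 1 (specRad A₁) with hr
    have hub : ∀ ρ' : ℝ, r < ρ' → JSR ![A₁, A₂] ≤ ρ' := by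
      intro ρ' hρ'
      have hρ1 : 1 < ρ' := lt_of_le_of_lt (le_max_left _ _) hρ'
      obtain ⟨K, hK1, hK⟩ := spec3 A₁ (lt_of_le_of_lt (le_max_right 1 (specRad A₁)) hρ')
        (by linarith)
      set C := (s:ℝ) * (s:ℝ) * K with hC
      have hC1 : 1 ≤ C := by
        have hs1 : (1:ℝ) ≤ (s:ℝ) := by exact_mod_cast hs
        nlinarith
      have hC0 : 0 < C := by linarith
      have hSn : ∀ m : ℕ, 1 ≤ m → Snorm A₁ A₂ m ≤ C * ρ' ^ m := by
        intro m hm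
        apply ciSup_le
        intro w
        obtain ⟨c, hcm, hcb⟩ := word_dominated h₁ hnat hle w
        refine le_trans (l2OpNorm_le_sum_abs _) ?_
        have hW : ∀ i j, |wordProd ![A₁, A₂] w i j| ≤ K * ρ' ^ m := by
          intro i j
          rw [abs_of_nonneg (wordProd_nonneg hnat w i j)]
          refine le_trans (hcb i j) (le_trans (le_abs_self _) ?_)
          refine le_trans (hK c i j) ?_
          exact mul_le_mul_of_nonneg_left (pow_le_pow_right₀ (by linarith) hcm) (by linarith)
        calc ∑ i, ∑ j, |wordProd ![A₁, A₂] w i j| ≤ ∑ _i : Fin s, ∑ _j : Fin s, K * ρ' ^ m :=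
              Finset.sum_le_sum fun i _ => Finset.sum_le_sum fun j _ => hW i j
          _ = C * ρ' ^ m := by rw [sum_const_fin, hC]; ring
      have hT : ∀ m : ℕ, 1 ≤ m → JSR ![A₁, A₂] ≤ C ^ (1/(m:ℝ)) * ρ' := by
        intro m hm
        refine le_trans (JSR_le_T A₁ A₂ hm) ?_
        have hm0 : (m:ℝ) ≠ 0 := Nat.cast_ne_zero.mpr (by omega)
        calc (Snorm A₁ A₂ m) ^ (1/(m:ℝ)) ≤ (C * ρ' ^ m) ^ (1/(m:ℝ)) :=
              Real.rpow_le_rpow (Snorm_nonneg A₁ A₂ m) (hSn m hm) (by positivity)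
          _ = C ^ (1/(m:ℝ)) * (ρ' ^ m) ^ (1/(m:ℝ)) :=
              Real.mul_rpow (by linarith) (by positivity)
          _ = C ^ (1/(m:ℝ)) * ρ' := by
              rw [← Real.rpow_natCast ρ' m, ← Real.rpow_mul (by linarith)]
              rw [show (m:ℝ) * (1/(m:ℝ)) = 1 by field_simp, Real.rpow_one]
      have hlim : Tendsto (fun m : ℕ => C ^ (1/(m:ℝ)) * ρ') atTop (𝓝 (1 * ρ')) :=
        (tendsto_rpow_one_div_nat C hC0).mul_const ρ'
      have := ge_of_tendsto hlim (eventually_atTop.mpr ⟨1, fun m hm => hT m hm⟩)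
      linarith [this]
    have hup : JSR ![A₁, A₂] ≤ r := by
      by_contra hcon
      push_neg at hcon
      have := hub ((r + JSR ![A₁, A₂]) / 2) (by linarith)
      linarith
    -- lower bound: specRad A₁ ≤ JSR
    have hlow : specRad A₁ ≤ JSR ![A₁, A₂] := by
      apply le_JSR
      intro n hn
      have hbound : ∀ k : ℕ, 1 ≤ k →
          specRad A₁ ≤ ((s:ℝ) * (s:ℝ)) ^ (1/((k*n : ℕ):ℝ)) * (Snorm A₁ A₂ n) ^ (1/(n:ℝ)) := by
        intro k hk
        have hkn : 1 ≤ k * n := Nat.one_le_iff_ne_zero.mpr (Nat.mul_ne_zero (by omega) (by omega))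
        have hsum : ∑ i, ∑ j, |(A₁ ^ (k*n)) i j|
            ≤ (s:ℝ) * (s:ℝ) * (Snorm A₁ A₂ n) ^ k := by
          have hA1w : A₁ ^ (k*n) = wordProd ![A₁, A₂] (fun _ : Fin (k*n) => 0) := by
            rw [wordProd_const]
            rfl
          have hone : ∀ i j, |(A₁ ^ (k*n)) i j| ≤ (Snorm A₁ A₂ n) ^ k := by
            intro i j
            rw [hA1w]
            refine le_trans (abs_entry_le_l2OpNorm _ i j) ?_
            refine le_trans (le_Snorm A₁ A₂ _) ?_
            exact Snorm_pow A₁ A₂ k hk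
          calc ∑ i, ∑ j, |(A₁ ^ (k*n)) i j|
              ≤ ∑ _i : Fin s, ∑ _j : Fin s, (Snorm A₁ A₂ n) ^ k :=
                Finset.sum_le_sum fun i _ => Finset.sum_le_sum fun j _ => hone i j
            _ = (s:ℝ) * (s:ℝ) * (Snorm A₁ A₂ n) ^ k := by
                rw [sum_const_fin]
        have := spec1 A₁ hkn hs hsum
        refine le_trans this (le_of_eq ?_)
        have hn0 : (n:ℝ) ≠ 0 := Nat.cast_ne_zero.mpr (by omega)
        have hk0 : (k:ℝ) ≠ 0 := Nat.cast_ne_zero.mpr (by omega)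
        rw [Real.mul_rpow (by positivity) (pow_nonneg (Snorm_nonneg A₁ A₂ n) k)]
        congr 1
        rw [← Real.rpow_natCast (Snorm A₁ A₂ n) k, ← Real.rpow_mul (Snorm_nonneg A₁ A₂ n)]
        congr 1
        push_cast
        field_simp
      have hlim : Tendsto (fun k : ℕ =>
          ((s:ℝ) * (s:ℝ)) ^ (1/((k*n : ℕ):ℝ)) * (Snorm A₁ A₂ n) ^ (1/(n:ℝ))) atTop
          (𝓝 (1 * (Snorm A₁ A₂ n) ^ (1/(n:ℝ)))) := by
        apply Tendsto.mul_const
        have hcomp : Tendsto (fun k : ℕ => k * n) atTop atTop := by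
          apply tendsto_atTop_mono (fun k => Nat.le_mul_of_pos_right k hn)
          exact tendsto_id
        have := (tendsto_rpow_one_div_nat ((s:ℝ) * (s:ℝ)) (by positivity)).comp hcomp
        exact this
      have := ge_of_tendsto hlim (eventually_atTop.mpr ⟨1, fun k hk => hbound k hk⟩)
      rwa [one_mul] at this
    -- split on whether specRad A₁ ≥ 1
    rcases le_or_gt 1 (specRad A₁) with hsr | hsr
    · -- witness: the single letter A₁
      have hJeq : JSR ![A₁, A₂] = specRad A₁ := by
        apply le_antisymm _ hlow
        rwa [hr, max_eq_right hsr] at hup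
      refine ⟨1, le_rfl, fun _ => 0, ?_⟩
      rw [wordProd_one']
      rw [show (![A₁, A₂]) ((fun _ : Fin 1 => (0 : Fin 2)) 0) = A₁ from rfl]
      rw [hJeq]
      norm_num
    · -- specRad A₁ < 1 : JSR = 1; find a word with a positive diagonal entry
      have hJeq : JSR ![A₁, A₂] = 1 := by
        apply le_antisymm _ hJ1
        rwa [hr, max_eq_left (le_of_lt hsr)] at hup
      -- pigeonhole: a word v of length m with (wordProd v) k k ≥ 1
      obtain ⟨w, hwne⟩ := hzero s hs
      have hentry : ∃ i j, wordProd ![A₁, A₂] w i j ≠ 0 := by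
        by_contra hc
        push_neg at hc
        exact hwne (Matrix.ext fun i j => hc i j)
      obtain ⟨i0, j0, hij⟩ := hentry
      obtain ⟨p, hplast, hp0, hstep⟩ := exists_path hnat w i0 j0 hij
      obtain ⟨x, y, hxy, hpxy⟩ := Fintype.exists_ne_map_eq_of_card_lt p (by simp)
      obtain ⟨x, y, hlt, hpxy⟩ : ∃ x y : Fin (s+1), (x:ℕ) < (y:ℕ) ∧ p x = p y := by
        rcases lt_or_gt_of_ne (fun h => hxy (by exact_mod_cast Fin.ext h) :
            (x:ℕ) ≠ (y:ℕ)) with h | h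
        · exact ⟨x, y, h, hpxy⟩
        · exact ⟨y, x, h, hpxy.symm⟩
      set m := (y:ℕ) - (x:ℕ) with hm
      have hm1 : 1 ≤ m := by omega
      have hys : (y:ℕ) ≤ s := by omega
      have hxms : (x:ℕ) + m ≤ s := by omega
      set v : Fin m → Fin 2 := fun t => w ⟨(x:ℕ) + (t:ℕ), by omega⟩ with hv
      set q : Fin (m+1) → Fin s := fun t => p ⟨(x:ℕ) + (t:ℕ), by omega⟩ with hq
      have hstep' : ∀ t : Fin m, (![A₁, A₂]) (v t) (q t.succ) (q t.castSucc) ≠ 0 := by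
        intro t
        have ht := hstep ⟨(x:ℕ) + (t:ℕ), by omega⟩
        have e1 : q t.succ = p (Fin.succ ⟨(x:ℕ) + (t:ℕ), by omega⟩) := by
          apply congrArg p
          apply Fin.ext
          simp [hq, Fin.val_succ]
          omega
        have e2 : q t.castSucc = p (Fin.castSucc ⟨(x:ℕ) + (t:ℕ), by omega⟩) := by
          apply congrArg p
          apply Fin.ext
          simp [hq]
        rw [e1, e2]
        exact ht
      have hdiag := path_entry_ne_zero hnat v q hstep'
      have hql : q (Fin.last m) = p y := by
        apply congrArg p
        apply Fin.ext
        simp [hq]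
        omega
      have hq0 : q 0 = p x := by
        apply congrArg p
        apply Fin.ext
        simp [hq]
      rw [hql, hq0, ← hpxy] at hdiag
      set k0 := p x with hk0
      set V := wordProd ![A₁, A₂] v with hV
      have hVnat : IsNatMat V := IsNatMat.wordProd hnat v
      have hVkk : 1 ≤ V k0 k0 := hVnat.one_le hdiag
      -- specRad V = 1
      have hVlow : 1 ≤ specRad V := by
        apply spec2
        intro j hj
        exact ⟨k0, k0, diag_pow_ge_one hVnat hVkk j⟩
      have hVup : specRad V ≤ 1 := by
        -- specRad V ≤ ρ'^m for every ρ' > 1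
        have key : ∀ ρ' : ℝ, 1 < ρ' → specRad V ≤ ρ' ^ m := by
          intro ρ' hρ'
          obtain ⟨K, hK1, hK⟩ := spec3 A₁ (lt_trans hsr hρ') (by linarith)
          set C := (s:ℝ) * (s:ℝ) * K with hC
          have hC1 : 1 ≤ C := by
            have hs1 : (1:ℝ) ≤ (s:ℝ) := by exact_mod_cast hs
            nlinarith
          have hC0 : 0 < C := by linarith
          have hstepj : ∀ j : ℕ, 1 ≤ j → specRad V ≤ C ^ (1/(j:ℝ)) * ρ' ^ m := by
            intro j hj
            obtain ⟨w', hw'⟩ := wordProd_pow ![A₁, A₂] v j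
            have hsum : ∑ i, ∑ l, |(V ^ j) i l| ≤ C * (ρ' ^ m) ^ j := by
              obtain ⟨c, hcm, hcb⟩ := word_dominated h₁ hnat hle w'
              have hone : ∀ i l, |(V ^ j) i l| ≤ K * (ρ' ^ m) ^ j := by
                intro i l
                rw [← hw', abs_of_nonneg (wordProd_nonneg hnat w' i l)]
                refine le_trans (hcb i l) (le_trans (le_abs_self _) ?_)
                refine le_trans (hK c i l) ?_
                rw [← pow_mul]
                exact mul_le_mul_of_nonneg_left
                  (pow_le_pow_right₀ (by linarith)
                    (le_trans hcm (le_of_eq (Nat.mul_comm j m)))) (by linarith)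
              calc ∑ i, ∑ l, |(V ^ j) i l| ≤ ∑ _i : Fin s, ∑ _l : Fin s, K * (ρ' ^ m) ^ j :=
                    Finset.sum_le_sum fun i _ => Finset.sum_le_sum fun l _ => hone i l
                _ = C * (ρ' ^ m) ^ j := by rw [sum_const_fin, hC]; ring
            have := spec1 V hj hs hsum
            refine le_trans this (le_of_eq ?_)
            have hj0 : (j:ℝ) ≠ 0 := Nat.cast_ne_zero.mpr (by omega)
            rw [Real.mul_rpow (by linarith) (by positivity)]
            congr 1
            rw [← Real.rpow_natCast (ρ' ^ m) j, ← Real.rpow_mul (by positivity)]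
            rw [show (j:ℝ) * (1/(j:ℝ)) = 1 by field_simp, Real.rpow_one]
          have hlim : Tendsto (fun j : ℕ => C ^ (1/(j:ℝ)) * ρ' ^ m) atTop
              (𝓝 (1 * ρ' ^ m)) :=
            (tendsto_rpow_one_div_nat C hC0).mul_const _
          have := ge_of_tendsto hlim (eventually_atTop.mpr ⟨1, fun j hj => hstepj j hj⟩)
          rwa [one_mul] at this
        by_contra hcon
        push_neg at hcon
        set yv := specRad V with hyv
        have hy0 : (0:ℝ) < yv := by linarith
        set ρ' := yv ^ ((1:ℝ)/(2*m)) with hρ'def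
        have hm0 : (0:ℝ) < (m:ℝ) := by exact_mod_cast hm1
        have hρ'1 : 1 < ρ' := by
          rw [hρ'def]
          rw [Real.one_lt_rpow_iff_of_pos hy0]
          left
          constructor
          · exact hcon
          · positivity
        have hmne : (m:ℝ) ≠ 0 := ne_of_gt hm0
        have hρ'm : ρ' ^ m = yv ^ ((1:ℝ)/2) := by
          rw [hρ'def, ← Real.rpow_natCast (yv ^ ((1:ℝ)/(2*m))) m, ← Real.rpow_mul (le_of_lt hy0)]
          congr 1
          field_simp
        have hsqrt : yv ^ ((1:ℝ)/2) < yv := by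
          have h2 := (Real.rpow_lt_rpow_left_iff hcon).mpr (by norm_num : (1:ℝ)/2 < 1)
          rwa [Real.rpow_one] at h2
        have := key ρ' hρ'1
        rw [hρ'm] at this
        linarith
      have hVeq : specRad V = 1 := le_antisymm hVup hVlow
      refine ⟨m, hm1, v, ?_⟩
      rw [← hV, hVeq, hJeq, Real.one_rpow]
end

section
/- Let (A j)_{j : Fin J} (J ≥ 1) be a finite family of real (s₁+s₂)×(s₁+s₂) matrices, and suppose there is an invertible real (s₁+s₂)×(s₁+s₂) matrix V such that for every j, V · A j · V⁻¹ is block upper triangular, i.e., equal to fromBlocks (B j) (C j) 0 (D j) for some s₁×s₁ matrices B j, s₁×s₂ matrices C j and s₂×s₂ matrices D j. Then JSR((A j)_j) = max(JSR((B j)_j), JSR((D j)_j)). -/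
open Matrix

open scoped Matrix.Norms.L2Operator

namespace JsrAux

variable {J : ℕ}

/-- generalized word product -/
noncomputable def wp {m : Type*} [Fintype m] [DecidableEq m] {n : ℕ}
    (A : Fin J → Matrix m m ℝ) (w : Fin n → Fin J) : Matrix m m ℝ :=
  ((List.ofFn fun i => A (w i)).reverse).prod

variable {m : Type*} [Fintype m] [DecidableEq m]

lemma wp_zero (A : Fin J → Matrix m m ℝ) (w : Fin 0 → Fin J) : wp A w = 1 := by
  simp [wp]

lemma wp_one' (A : Fin J → Matrix m m ℝ) (w : Fin 1 → Fin J) : wp A w = A (w 0) := by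
  simp [wp]

lemma wp_succ {n : ℕ} (A : Fin J → Matrix m m ℝ) (w : Fin (n+1) → Fin J) :
    wp A w = A (w (Fin.last n)) * wp A (w ∘ Fin.castSucc) := by
  rw [wp, List.ofFn_succ', List.concat_eq_append, List.reverse_append]
  simp [wp]

lemma wp_add {a b : ℕ} (A : Fin J → Matrix m m ℝ) (w : Fin (a+b) → Fin J) :
    wp A w = wp A (fun i => w (Fin.natAdd a i)) * wp A (fun i => w (Fin.castAdd b i)) := by
  rw [wp, List.ofFn_add, List.reverse_append, List.prod_append]
  rfl

/-- sup over words of given length of norm of word product -/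
noncomputable def Fn (A : Fin J → Matrix m m ℝ) (n : ℕ) : ℝ :=
  ⨆ w : Fin n → Fin J, ‖wp A w‖

lemma norm_wp_le_Fn (A : Fin J → Matrix m m ℝ) {n : ℕ} (w : Fin n → Fin J) :
    ‖wp A w‖ ≤ Fn A n := by
  exact le_ciSup (Set.Finite.bddAbove (Set.finite_range (fun w : Fin n → Fin J => ‖wp A w‖))) w

lemma Fn_nonneg (hJ : 1 ≤ J) (A : Fin J → Matrix m m ℝ) (n : ℕ) : 0 ≤ Fn A n :=
  (norm_nonneg _).trans (norm_wp_le_Fn A (fun _ => ⟨0, hJ⟩))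

lemma Fn_le (hJ : 1 ≤ J) (A : Fin J → Matrix m m ℝ) {n : ℕ} {x : ℝ}
    (h : ∀ w : Fin n → Fin J, ‖wp A w‖ ≤ x) : Fn A n ≤ x := by
  haveI : Nonempty (Fin J) := ⟨⟨0, hJ⟩⟩
  exact ciSup_le h

lemma Fn_submul (hJ : 1 ≤ J) (A : Fin J → Matrix m m ℝ) (a b : ℕ) :
    Fn A (a + b) ≤ Fn A b * Fn A a := by
  refine Fn_le hJ A fun w => ?_
  rw [wp_add]
  calc ‖wp A (fun i => w (Fin.natAdd a i)) * wp A (fun i => w (Fin.castAdd b i))‖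
      ≤ ‖wp A (fun i => w (Fin.natAdd a i))‖ * ‖wp A (fun i => w (Fin.castAdd b i))‖ :=
        norm_mul_le _ _
    _ ≤ Fn A b * Fn A a := by
        apply mul_le_mul (norm_wp_le_Fn A _) (norm_wp_le_Fn A _) (norm_nonneg _)
          (Fn_nonneg hJ A b)

/-- generalized JSR -/
noncomputable def JSRg (A : Fin J → Matrix m m ℝ) : ℝ :=
  ⨅ n : {k : ℕ // 1 ≤ k}, (Fn A n) ^ (1 / ((n : ℕ) : ℝ))

lemma JSRg_nonneg (hJ : 1 ≤ J) (A : Fin J → Matrix m m ℝ) : 0 ≤ JSRg A :=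
  Real.iInf_nonneg fun n => Real.rpow_nonneg (Fn_nonneg hJ A n) _

lemma JSRg_le (hJ : 1 ≤ J) (A : Fin J → Matrix m m ℝ) {n : ℕ} (hn : 1 ≤ n) :
    JSRg A ≤ (Fn A n) ^ (1 / (n : ℝ)) := by
  have hb : BddBelow (Set.range fun k : {k : ℕ // 1 ≤ k} =>
      (Fn A k) ^ (1 / ((k : ℕ) : ℝ))) := by
    refine ⟨0, ?_⟩
    rintro x ⟨k, rfl⟩
    exact Real.rpow_nonneg (Fn_nonneg hJ A _) _
  exact ciInf_le hb ⟨n, hn⟩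

open Filter Topology
-- tendsto helper
lemma tendsto_aux {K : ℝ} (hK : 0 < K) :
    Tendsto (fun n : ℕ => (K * (n + 1)) ^ (1 / (n : ℝ))) atTop (𝓝 1) := by
  have h1 : Tendsto (fun n : ℕ => Real.log (K * (n + 1)) / n) atTop (𝓝 0) := by
    have hlog : Tendsto (fun x : ℝ => Real.log x / x) atTop (𝓝 0) :=
      Real.isLittleO_log_id_atTop.tendsto_div_nhds_zero
    have h2 : Tendsto (fun n : ℕ => Real.log ((n : ℝ) + 1) / ((n : ℝ) + 1)) atTop (𝓝 0) :=
      hlog.comp (tendsto_atTop_add_const_right _ 1 tendsto_natCast_atTop_atTop)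
    have h3 : Tendsto (fun n : ℕ => ((n : ℝ) + 1) / n) atTop (𝓝 1) := by
      have ha : Tendsto (fun n : ℕ => 1 + 1 / (n:ℝ)) atTop (𝓝 (1 + 0)) :=
        Tendsto.add tendsto_const_nhds (tendsto_const_div_atTop_nhds_zero_nat 1)
      rw [add_zero] at ha
      refine ha.congr' ?_
      filter_upwards [eventually_gt_atTop 0] with n hn
      have : (n : ℝ) ≠ 0 := Nat.cast_ne_zero.mpr hn.ne'
      field_simp
    have h4 : Tendsto (fun n : ℕ => Real.log ((n:ℝ) + 1) / n) atTop (𝓝 0) := by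
      have := h2.mul h3
      rw [zero_mul] at this
      refine this.congr' ?_
      filter_upwards [eventually_gt_atTop 0] with n hn
      have hn' : (n : ℝ) ≠ 0 := Nat.cast_ne_zero.mpr hn.ne'
      field_simp
    have h5 : Tendsto (fun n : ℕ => Real.log K / n) atTop (𝓝 0) :=
      tendsto_const_div_atTop_nhds_zero_nat _
    have := h5.add h4
    rw [add_zero] at this
    refine this.congr' ?_
    filter_upwards [eventually_gt_atTop 0] with n hn
    rw [← add_div, ← Real.log_mul hK.ne' (by positivity)]
  have h6 : Tendsto (fun n : ℕ => Real.exp (Real.log (K * (n + 1)) / n)) atTop (𝓝 1) := by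
    simpa [Function.comp_def] using (Real.continuous_exp.tendsto 0).comp h1
  refine h6.congr fun n => ?_
  rw [Real.rpow_def_of_pos (by positivity), mul_one_div]

lemma le_of_forall_gt' {a b : ℝ} (h : ∀ r, b < r → a ≤ r) : a ≤ b := by
  by_contra hc
  push_neg at hc
  obtain ⟨r, hr1, hr2⟩ := exists_between hc
  exact absurd (h r hr1) (not_le.mpr hr2)

lemma Fn_pow_le (hJ : 1 ≤ J) (A : Fin J → Matrix m m ℝ) :
    ∀ t, 1 ≤ t → Fn A t ≤ (Fn A 1) ^ t := by
  intro t ht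
  induction t with
  | zero => omega
  | succ t ih =>
    rcases Nat.eq_or_lt_of_le ht with h1 | h1
    · simp [← h1]
    · have ht' : 1 ≤ t := by omega
      calc Fn A (t + 1) ≤ Fn A 1 * Fn A t := Fn_submul hJ A t 1
        _ ≤ Fn A 1 * (Fn A 1) ^ t := by
            apply mul_le_mul_of_nonneg_left (ih ht') (Fn_nonneg hJ A 1)
        _ = (Fn A 1) ^ (t + 1) := by ring

lemma Fn_mul_pow_le (hJ : 1 ≤ J) (A : Fin J → Matrix m m ℝ) (k : ℕ) :
    ∀ q, 1 ≤ q → Fn A (q * k) ≤ (Fn A k) ^ q := by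
  intro q hq
  induction q with
  | zero => omega
  | succ q ih =>
    rcases Nat.eq_or_lt_of_le hq with h1 | h1
    · simp [← h1]
    · have hq' : 1 ≤ q := by omega
      calc Fn A ((q + 1) * k) = Fn A (q * k + k) := by ring_nf
        _ ≤ Fn A k * Fn A (q * k) := Fn_submul hJ A (q * k) k
        _ ≤ Fn A k * (Fn A k) ^ q := by
            apply mul_le_mul_of_nonneg_left (ih hq') (Fn_nonneg hJ A k)
        _ = (Fn A k) ^ (q + 1) := by ring

/-- L4: geometric bound above the JSR -/
lemma exists_geom (hJ : 1 ≤ J) (A : Fin J → Matrix m m ℝ) {r : ℝ} (hr : JSRg A < r) :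
    ∃ K : ℝ, 1 ≤ K ∧ ∀ n, 1 ≤ n → Fn A n ≤ K * r ^ n := by
  have hr0 : 0 < r := lt_of_le_of_lt (JSRg_nonneg hJ A) hr
  -- find a good length k
  have hex : ∃ k : ℕ, 1 ≤ k ∧ Fn A k ≤ r ^ k := by
    by_contra hc
    push_neg at hc
    have : r ≤ JSRg A := by
      rw [JSRg]
      refine le_ciInf fun k => ?_
      have h1 : r ^ (k : ℕ) ≤ Fn A k := (hc k k.2).le
      have h2 : (r ^ (k : ℕ)) ^ (1 / ((k : ℕ) : ℝ)) ≤ (Fn A k) ^ (1 / ((k : ℕ) : ℝ)) :=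
        Real.rpow_le_rpow (by positivity) h1 (by positivity)
      have hk0 : ((k : ℕ) : ℝ) ≠ 0 := Nat.cast_ne_zero.mpr (by omega)
      rwa [← Real.rpow_natCast r k, ← Real.rpow_mul hr0.le,
        mul_one_div, div_self hk0, Real.rpow_one] at h2
    exact absurd hr (not_lt.mpr this)
  obtain ⟨k, hk1, hk⟩ := hex
  set u : ℝ := max (Fn A 1) 1 with hu
  set v : ℝ := min r 1 with hv
  have hu1 : 1 ≤ u := le_max_right _ _
  have hv0 : 0 < v := lt_min hr0 one_pos
  have hv1 : v ≤ 1 := min_le_right _ _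
  have hvr : v ≤ r := min_le_left _ _
  have hu0 : 0 < u := lt_of_lt_of_le one_pos hu1
  refine ⟨(u / v) ^ k, one_le_pow₀ ((one_le_div hv0).mpr (hv1.trans hu1)), fun n hn => ?_⟩
  obtain ⟨q, t, hnqt, htk⟩ : ∃ q t, k * q + t = n ∧ t < k :=
    ⟨n / k, n % k, Nat.div_add_mod n k, Nat.mod_lt n (by omega)⟩
  have hukpos : (0:ℝ) < u ^ k := pow_pos hu0 k
  have hvkpos : (0:ℝ) < v ^ k := pow_pos hv0 k
  have hut : ∀ a, a ≤ k → Fn A 1 ^ a ≤ u ^ k := fun a ha =>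
    (pow_le_pow_left₀ (Fn_nonneg hJ A 1) (le_max_left _ _) a).trans
      (pow_le_pow_right₀ hu1 ha)
  -- claim1 : Fn A n ≤ u^k * r^(k*q)
  have claim1 : Fn A n ≤ u ^ k * r ^ (k * q) := by
    rcases Nat.eq_zero_or_pos q with hq0 | hq0
    · -- n = t < k
      have hnt : n = t := by rw [← hnqt, hq0, Nat.mul_zero, Nat.zero_add]
      rw [hq0, Nat.mul_zero, pow_zero, mul_one]
      calc Fn A n ≤ (Fn A 1) ^ n := Fn_pow_le hJ A n hn
        _ ≤ u ^ k := hut n (by omega)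
    · have hfqk : Fn A (k * q) ≤ r ^ (k * q) := by
        rw [Nat.mul_comm k q]
        calc Fn A (q * k) ≤ (Fn A k) ^ q := Fn_mul_pow_le hJ A k q hq0
          _ ≤ (r ^ k) ^ q := pow_le_pow_left₀ (Fn_nonneg hJ A k) hk q
          _ = r ^ (q * k) := by rw [← pow_mul, Nat.mul_comm]
      rcases Nat.eq_zero_or_pos t with ht0 | ht0
      · have hn' : n = k * q := by rw [← hnqt, ht0, Nat.add_zero]
        rw [hn']
        calc Fn A (k * q) ≤ r ^ (k * q) := hfqk
          _ ≤ u ^ k * r ^ (k * q) :=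
            le_mul_of_one_le_left (by positivity) (one_le_pow₀ hu1)
      · have hsplit : n = k * q + t := hnqt.symm
        rw [hsplit]
        calc Fn A (k * q + t) ≤ Fn A t * Fn A (k * q) := Fn_submul hJ A (k * q) t
          _ ≤ u ^ k * r ^ (k * q) := by
              apply mul_le_mul _ hfqk (Fn_nonneg hJ A _) (by positivity)
              calc Fn A t ≤ (Fn A 1) ^ t := Fn_pow_le hJ A t ht0
                _ ≤ u ^ k := hut t (by omega)
  -- claim2 : u^k * r^(k*q) ≤ (u/v)^k * r^n
  have claim2 : u ^ k * r ^ (k * q) ≤ (u / v) ^ k * r ^ n := by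
    have h1 : r ^ n = r ^ (k * q) * r ^ t := by rw [← pow_add, hnqt]
    have key : v ^ k ≤ r ^ t := by
      calc v ^ k ≤ v ^ t := pow_le_pow_of_le_one hv0.le hv1 (by omega)
        _ ≤ r ^ t := pow_le_pow_left₀ hv0.le hvr t
    rw [h1, div_pow, div_mul_eq_mul_div, le_div_iff₀ hvkpos]
    calc u ^ k * r ^ (k * q) * v ^ k ≤ u ^ k * r ^ (k * q) * r ^ t :=
        mul_le_mul_of_nonneg_left key (by positivity)
      _ = u ^ k * (r ^ (k * q) * r ^ t) := by ring
  exact claim1.trans claim2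

/-- L3: polynomial-times-geometric bound gives JSR bound -/
lemma jsrg_le_of_poly (hJ : 1 ≤ J) (A : Fin J → Matrix m m ℝ) {K r : ℝ}
    (hK : 0 < K) (hr : 0 < r)
    (h : ∀ n, 1 ≤ n → Fn A n ≤ K * (n + 1) * r ^ n) : JSRg A ≤ r := by
  have bound : ∀ n : ℕ, 1 ≤ n → JSRg A ≤ (K * (n + 1)) ^ (1 / (n : ℝ)) * r := by
    intro n hn
    have hn0 : ((n : ℕ) : ℝ) ≠ 0 := Nat.cast_ne_zero.mpr (by omega)
    have h1 : JSRg A ≤ (Fn A n) ^ (1 / (n : ℝ)) := JSRg_le hJ A hn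
    have h2 : (Fn A n) ^ (1 / (n : ℝ)) ≤ (K * (n + 1) * r ^ n) ^ (1 / (n : ℝ)) :=
      Real.rpow_le_rpow (Fn_nonneg hJ A n) (h n hn) (by positivity)
    have h3 : (K * (n + 1) * r ^ n) ^ (1 / (n : ℝ)) =
        (K * (n + 1)) ^ (1 / (n : ℝ)) * r := by
      rw [Real.mul_rpow (by positivity) (by positivity)]
      congr 1
      rw [← Real.rpow_natCast r n, ← Real.rpow_mul hr.le, mul_one_div, div_self hn0,
        Real.rpow_one]
    exact h1.trans (h2.trans_eq h3)
  have T : Tendsto (fun n : ℕ => (K * (n + 1)) ^ (1 / (n : ℝ)) * r) atTop (𝓝 (1 * r)) :=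
    (tendsto_aux hK).mul_const r
  rw [one_mul] at T
  exact ge_of_tendsto T (eventually_atTop.mpr ⟨1, bound⟩)

/-- L1: domination up to a constant gives JSR comparison -/
lemma jsrg_le_jsrg {m' : Type*} [Fintype m'] [DecidableEq m'] (hJ : 1 ≤ J)
    {A : Fin J → Matrix m m ℝ} {A' : Fin J → Matrix m' m' ℝ} {K : ℝ} (hK : 1 ≤ K)
    (h : ∀ n, 1 ≤ n → Fn A n ≤ K * Fn A' n) : JSRg A ≤ JSRg A' := by
  refine le_of_forall_gt' fun r hr => ?_
  have hr0 : 0 < r := lt_of_le_of_lt (JSRg_nonneg hJ A') hr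
  obtain ⟨K', hK', hgeom⟩ := exists_geom hJ A' hr
  refine jsrg_le_of_poly hJ A (K := K * K') (by positivity) hr0 fun n hn => ?_
  calc Fn A n ≤ K * Fn A' n := h n hn
    _ ≤ K * (K' * r ^ n) := by
        apply mul_le_mul_of_nonneg_left (hgeom n hn) (by linarith)
    _ = K * K' * r ^ n := by ring
    _ ≤ K * K' * (n + 1) * r ^ n := by
        have h1 : (1:ℝ) ≤ (n:ℝ) + 1 := by
          have : (0:ℝ) ≤ (n:ℝ) := Nat.cast_nonneg n
          linarith
        have hKK : (0:ℝ) ≤ K * K' := by positivity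
        exact mul_le_mul_of_nonneg_right (le_mul_of_one_le_right hKK h1)
          (pow_nonneg hr0.le n)

lemma ciSup_rpow {ι : Type*} [Finite ι] [Nonempty ι] (f : ι → ℝ)
    (hf : ∀ i, 0 ≤ f i) {c : ℝ} (hc : 0 ≤ c) :
    (⨆ i, f i ^ c) = (⨆ i, f i) ^ c := by
  obtain ⟨i₀, hi₀⟩ := Finite.exists_max f
  have h1 : (⨆ i, f i) = f i₀ :=
    le_antisymm (ciSup_le hi₀) (le_ciSup (Set.Finite.bddAbove (Set.finite_range f)) i₀)
  rw [h1]
  refine le_antisymm (ciSup_le fun i => Real.rpow_le_rpow (hf i) (hi₀ i) hc) ?_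
  exact le_ciSup (Set.Finite.bddAbove (Set.finite_range fun i => f i ^ c)) i₀


section
set_option linter.unusedSectionVars false
variable {α β γ δ : Type*} [Fintype α] [Fintype β] [Fintype γ] [Fintype δ]
  [DecidableEq α] [DecidableEq β] [DecidableEq γ] [DecidableEq δ]

lemma norm_one_le : ‖(1 : Matrix α α ℝ)‖ ≤ 1 := by
  rw [Matrix.cstar_norm_def, _root_.map_one]
  exact ContinuousLinearMap.norm_id_le

lemma norm_mul3_le (X : Matrix α β ℝ) (M : Matrix β γ ℝ) (Y : Matrix γ δ ℝ) :
    ‖X * M * Y‖ ≤ ‖X‖ * ‖M‖ * ‖Y‖ := by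
  calc ‖X * M * Y‖ ≤ ‖X * M‖ * ‖Y‖ := Matrix.l2_opNorm_mul _ _
    _ ≤ ‖X‖ * ‖M‖ * ‖Y‖ :=
        mul_le_mul_of_nonneg_right (Matrix.l2_opNorm_mul _ _) (norm_nonneg _)

lemma sandwich {X : Matrix α β ℝ} {M : Matrix β γ ℝ} {Y : Matrix γ δ ℝ}
    (hX : ‖X‖ ≤ 1) (hY : ‖Y‖ ≤ 1) : ‖X * M * Y‖ ≤ ‖M‖ := by
  calc ‖X * M * Y‖ ≤ ‖X‖ * ‖M‖ * ‖Y‖ := norm_mul3_le X M Y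
    _ = ‖M‖ * (‖X‖ * ‖Y‖) := by ring
    _ ≤ ‖M‖ * 1 := by
        apply mul_le_mul_of_nonneg_left _ (norm_nonneg M)
        calc ‖X‖ * ‖Y‖ ≤ 1 * 1 :=
          mul_le_mul hX hY (norm_nonneg _) zero_le_one
          _ = 1 := one_mul 1
    _ = ‖M‖ := mul_one _

lemma norm_le_one_of_conjT_mul_self {A : Matrix α β ℝ} (h : Aᴴ * A = 1) : ‖A‖ ≤ 1 := by
  have h2 := Matrix.l2_opNorm_conjTranspose_mul_self A
  rw [h] at h2
  have h3 : ‖A‖ * ‖A‖ ≤ 1 := h2 ▸ norm_one_le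
  nlinarith [norm_nonneg A]

/-- inclusion of the first summand -/
noncomputable def inclL : Matrix (α ⊕ β) α ℝ := fromRows 1 0
/-- inclusion of the second summand -/
noncomputable def inclR : Matrix (α ⊕ β) β ℝ := fromRows 0 1

lemma inclL_conjT : (inclL (α := α) (β := β))ᴴ = fromCols 1 0 := by
  rw [inclL, conjTranspose_fromRows_eq_fromCols_conjTranspose, conjTranspose_one,
    conjTranspose_zero]

lemma inclR_conjT : (inclR (α := α) (β := β))ᴴ = fromCols 0 1 := by
  rw [inclR, conjTranspose_fromRows_eq_fromCols_conjTranspose, conjTranspose_one,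
    conjTranspose_zero]

lemma norm_inclL_le : ‖(inclL (α := α) (β := β))‖ ≤ 1 := by
  apply norm_le_one_of_conjT_mul_self
  rw [inclL_conjT, inclL, fromCols_mul_fromRows]
  simp

lemma norm_inclR_le : ‖(inclR (α := α) (β := β))‖ ≤ 1 := by
  apply norm_le_one_of_conjT_mul_self
  rw [inclR_conjT, inclR, fromCols_mul_fromRows]
  simp

lemma inclL_conjT_mul_fromBlocks (P : Matrix α α ℝ) (Q : Matrix α β ℝ)
    (R : Matrix β α ℝ) (S : Matrix β β ℝ) :
    (inclL (α := α) (β := β))ᴴ * (fromBlocks P Q R S) * inclL (α := α) (β := β) = P := by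
  rw [inclL_conjT, inclL, Matrix.mul_assoc, fromBlocks_mul_fromRows,
    fromCols_mul_fromRows]
  simp

lemma inclR_conjT_mul_fromBlocks (P : Matrix α α ℝ) (Q : Matrix α β ℝ)
    (R : Matrix β α ℝ) (S : Matrix β β ℝ) :
    (inclR (α := α) (β := β))ᴴ * (fromBlocks P Q R S) * inclR (α := α) (β := β) = S := by
  rw [inclR_conjT, inclR, Matrix.mul_assoc, fromBlocks_mul_fromRows,
    fromCols_mul_fromRows]
  simp

lemma fromBlocks_decomp (P : Matrix α α ℝ) (Q : Matrix α β ℝ) (S : Matrix β β ℝ) :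
    fromBlocks P Q 0 S =
      inclL (α := α) (β := β) * P * (inclL (α := α) (β := β))ᴴ + inclL (α := α) (β := β) * Q * (inclR (α := α) (β := β))ᴴ + inclR (α := α) (β := β) * S * (inclR (α := α) (β := β))ᴴ := by
  have e1 : (inclL (α := α) (β := β)) * P * (inclL (α := α) (β := β))ᴴ = fromBlocks P 0 0 0 := by
    rw [inclL_conjT, inclL, fromRows_mul, fromRows_mul_fromCols]
    simp
  have e2 : (inclL (α := α) (β := β)) * Q * (inclR (α := α) (β := β))ᴴ = fromBlocks 0 Q 0 0 := by
    rw [inclR_conjT, inclL, fromRows_mul, fromRows_mul_fromCols]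
    simp
  have e3 : (inclR (α := α) (β := β)) * S * (inclR (α := α) (β := β))ᴴ = fromBlocks 0 0 0 S := by
    rw [inclR_conjT, inclR, fromRows_mul, fromRows_mul_fromCols]
    simp
  rw [e1, e2, e3, Matrix.fromBlocks_add, Matrix.fromBlocks_add]
  simp

lemma norm_blockL_le (P : Matrix α α ℝ) (Q : Matrix α β ℝ)
    (R : Matrix β α ℝ) (S : Matrix β β ℝ) :
    ‖P‖ ≤ ‖fromBlocks P Q R S‖ := by
  have h := sandwich (X := (inclL (α := α) (β := β))ᴴ) (M := fromBlocks P Q R S)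
    (Y := inclL) (by rw [Matrix.l2_opNorm_conjTranspose]; exact norm_inclL_le) norm_inclL_le
  rwa [inclL_conjT_mul_fromBlocks] at h

lemma norm_blockR_le (P : Matrix α α ℝ) (Q : Matrix α β ℝ)
    (R : Matrix β α ℝ) (S : Matrix β β ℝ) :
    ‖S‖ ≤ ‖fromBlocks P Q R S‖ := by
  have h := sandwich (X := (inclR (α := α) (β := β))ᴴ) (M := fromBlocks P Q R S)
    (Y := inclR) (by rw [Matrix.l2_opNorm_conjTranspose]; exact norm_inclR_le) norm_inclR_le
  rwa [inclR_conjT_mul_fromBlocks] at h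

lemma norm_fromBlocks_le (P : Matrix α α ℝ) (Q : Matrix α β ℝ) (S : Matrix β β ℝ) :
    ‖fromBlocks P Q 0 S‖ ≤ ‖P‖ + ‖Q‖ + ‖S‖ := by
  rw [fromBlocks_decomp]
  have hL : ‖(inclL (α := α) (β := β))ᴴ‖ ≤ 1 := by
    rw [Matrix.l2_opNorm_conjTranspose]; exact norm_inclL_le
  have hR : ‖(inclR (α := α) (β := β))ᴴ‖ ≤ 1 := by
    rw [Matrix.l2_opNorm_conjTranspose]; exact norm_inclR_le
  have h1 := sandwich (X := inclL (α := α) (β := β)) (M := P) (Y := (inclL (α := α) (β := β))ᴴ) norm_inclL_le hL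
  have h2 := sandwich (X := inclL (α := α) (β := β)) (M := Q) (Y := (inclR (α := α) (β := β))ᴴ) norm_inclL_le hR
  have h3 := sandwich (X := inclR (α := α) (β := β)) (M := S) (Y := (inclR (α := α) (β := β))ᴴ) norm_inclR_le hR
  have t1 := norm_add_le (inclL (α := α) (β := β) * P * (inclL (α := α) (β := β))ᴴ + inclL (α := α) (β := β) * Q * (inclR (α := α) (β := β))ᴴ)
    (inclR (α := α) (β := β) * S * (inclR (α := α) (β := β))ᴴ)
  have t2 := norm_add_le (inclL (α := α) (β := β) * P * (inclL (α := α) (β := β))ᴴ)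
    (inclL (α := α) (β := β) * Q * (inclR (α := α) (β := β))ᴴ)
  linarith

/-- permutation matrix of an equivalence -/
noncomputable def permM (e : α ≃ β) : Matrix α β ℝ := (e.toPEquiv).toMatrix

lemma permM_conjT (e : α ≃ β) : (permM e)ᴴ = permM e.symm := by
  have h : (permM e)ᵀ = permM e.symm := by
    rw [permM, permM, Equiv.toPEquiv_symm, PEquiv.toMatrix_symm]
  rw [← h]
  ext i j
  simp [conjTranspose_apply]

lemma permM_mul_permM (e : α ≃ β) : permM e * permM e.symm = 1 := by
  rw [permM, permM, ← PEquiv.toMatrix_trans, ← Equiv.toPEquiv_trans]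
  simp

lemma norm_permM_le (e : α ≃ β) : ‖permM e‖ ≤ 1 := by
  apply norm_le_one_of_conjT_mul_self
  rw [permM_conjT]
  have h := permM_mul_permM e.symm
  rwa [Equiv.symm_symm] at h

lemma permM_mul_mul (e : α ≃ β) (M : Matrix α α ℝ) :
    permM e.symm * M * permM e = Matrix.reindex e e M := by
  ext i j
  rw [Matrix.reindex_apply, Matrix.submatrix_apply, permM, permM,
    PEquiv.mul_toMatrix_apply]
  simp only [← Equiv.toPEquiv_symm, Equiv.toPEquiv_apply]
  rw [PEquiv.toMatrix_mul_apply]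
  simp [Equiv.toPEquiv_apply]

lemma norm_reindex (e : α ≃ β) (M : Matrix α α ℝ) : ‖Matrix.reindex e e M‖ = ‖M‖ := by
  refine le_antisymm ?_ ?_
  · rw [← permM_mul_mul e M]
    exact sandwich (norm_permM_le e.symm) (norm_permM_le e)
  · have h2 := sandwich (X := permM e) (M := Matrix.reindex e e M) (Y := permM e.symm)
      (norm_permM_le e) (norm_permM_le e.symm)
    have heq : permM e * (Matrix.reindex e e M) * permM e.symm = M := by
      have h3 := permM_mul_mul e.symm (Matrix.reindex e e M)
      rw [Equiv.symm_symm] at h3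
      rw [h3, Matrix.reindex_apply, Matrix.reindex_apply, submatrix_submatrix]
      simp
    rwa [heq] at h2

end

section Part4
set_option linter.unusedSectionVars false
variable {J : ℕ} {α β : Type*} [Fintype α] [Fintype β] [DecidableEq α] [DecidableEq β]

/-- list version of the word product -/
noncomputable def wpl {m : Type*} [Fintype m] [DecidableEq m]
    (A : Fin J → Matrix m m ℝ) (js : List (Fin J)) : Matrix m m ℝ :=
  ((js.map A).reverse).prod

variable {m : Type*} [Fintype m] [DecidableEq m]

lemma wpl_nil (A : Fin J → Matrix m m ℝ) : wpl A [] = 1 := by simp [wpl]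

lemma wpl_cons (A : Fin J → Matrix m m ℝ) (j : Fin J) (js : List (Fin J)) :
    wpl A (j :: js) = wpl A js * A j := by
  simp [wpl]

lemma wpl_ofFn (A : Fin J → Matrix m m ℝ) {n : ℕ} (w : Fin n → Fin J) :
    wpl A (List.ofFn w) = wp A w := by
  rw [wpl, wp, List.map_ofFn]
  rfl

lemma wpl_eq_wp (A : Fin J → Matrix m m ℝ) (js : List (Fin J)) :
    wpl A js = wp A (fun i : Fin js.length => js.get i) := by
  conv_lhs => rw [show js = List.ofFn (fun i : Fin js.length => js.get i) by
    simp]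
  rw [wpl_ofFn]

lemma norm_wpl_le_Fn (A : Fin J → Matrix m m ℝ) (js : List (Fin J)) :
    ‖wpl A js‖ ≤ Fn A js.length := by
  rw [wpl_eq_wp]
  exact norm_wp_le_Fn A _

/-- geometric bound on list products, valid also for the empty list -/
lemma norm_wpl_le_geom (A : Fin J → Matrix m m ℝ) {K r : ℝ} (hK : 1 ≤ K) (hr : 0 < r)
    (hgeom : ∀ n, 1 ≤ n → Fn A n ≤ K * r ^ n) (js : List (Fin J)) :
    ‖wpl A js‖ ≤ K * r ^ js.length := by
  rcases List.eq_nil_or_concat js with rfl | _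
  · rw [wpl_nil]
    calc ‖(1 : Matrix m m ℝ)‖ ≤ 1 := norm_one_le
      _ ≤ K * r ^ ([] : List (Fin J)).length := by simp [hK]
  · have hlen : 1 ≤ js.length := by
      rcases js with _ | ⟨a, l⟩
      · simp_all
      · simp
    exact (norm_wpl_le_Fn A js).trans (hgeom _ hlen)

variable (B : Fin J → Matrix α α ℝ) (C : Fin J → Matrix α β ℝ) (D : Fin J → Matrix β β ℝ)

/-- the off-diagonal block of a product of block-triangular matrices -/
noncomputable def offd (js : List (Fin J)) : Matrix α β ℝ :=
  ∑ k : Fin js.length, wpl B (js.drop (k + 1)) * C (js.get k) * wpl D (js.take k)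

/-- Key decomposition: the word product of a block-triangular family is block
triangular with the expected blocks. -/
lemma wpl_fromBlocks (js : List (Fin J)) :
    wpl (fun j => fromBlocks (B j) (C j) 0 (D j)) js =
      fromBlocks (wpl B js) (offd B C D js) 0 (wpl D js) := by
  induction js with
  | nil =>
    rw [wpl_nil, wpl_nil, wpl_nil]
    have : offd B C D ([] : List (Fin J)) = 0 := by
      simp [offd]
    rw [this, Matrix.fromBlocks_one]
  | cons j js ih =>
    rw [wpl_cons, ih, wpl_cons, wpl_cons, Matrix.fromBlocks_multiply]
    have hoff : wpl B js * C j + offd B C D js * D j = offd B C D (j :: js) := by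
      show _ = ∑ k : Fin (js.length + 1),
        wpl B ((j :: js).drop ((k : ℕ) + 1)) * C ((j :: js).get k) * wpl D ((j :: js).take (k : ℕ))
      rw [offd, Fin.sum_univ_succ, Matrix.sum_mul]
      congr 1
      · simp [wpl_nil]
      · refine Finset.sum_congr rfl fun k _ => ?_
        have h1 : (j :: js).drop ((k.succ : Fin (js.length + 1)) + 1 : ℕ) = js.drop (k + 1) := by
          simp [List.drop_succ_cons]
        have h2 : (j :: js).get k.succ = js.get k := by simp
        have h3 : (j :: js).take (k.succ : Fin (js.length + 1)) = j :: js.take k := by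
          simp [List.take_succ_cons]
        rw [h1, h2, h3, wpl_cons, Matrix.mul_assoc]
    rw [← hoff]
    simp

/-- norm bound on the off-diagonal block -/
lemma norm_offd_le (hJ : 1 ≤ J) {c KB KD r : ℝ}
    (hc : ∀ j, ‖C j‖ ≤ c) (hc0 : 0 ≤ c)
    (hKB : 1 ≤ KB) (hKD : 1 ≤ KD) (hr : 0 < r)
    (hgB : ∀ n, 1 ≤ n → Fn B n ≤ KB * r ^ n)
    (hgD : ∀ n, 1 ≤ n → Fn D n ≤ KD * r ^ n)
    (js : List (Fin J)) :
    ‖offd B C D js‖ ≤ js.length * (KB * c * KD) * r ^ (js.length - 1) := by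
  rw [offd]
  calc ‖∑ k : Fin js.length, wpl B (js.drop (k + 1)) * C (js.get k) * wpl D (js.take k)‖
      ≤ ∑ k : Fin js.length, ‖wpl B (js.drop (k + 1)) * C (js.get k) * wpl D (js.take k)‖ :=
        norm_sum_le _ _
    _ ≤ ∑ _k : Fin js.length, KB * c * KD * r ^ (js.length - 1) := by
        refine Finset.sum_le_sum fun k _ => ?_
        have hb := norm_wpl_le_geom B hKB hr hgB (js.drop (k + 1))
        have hd := norm_wpl_le_geom D hKD hr hgD (js.take k)
        have hlen1 : (js.drop ((k : ℕ) + 1)).length = js.length - 1 - k := by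
          rw [List.length_drop]
          omega
        have hlen2 : (js.take (k : ℕ)).length = k := by
          rw [List.length_take]
          exact Nat.min_eq_left (le_of_lt k.2)
        rw [hlen1] at hb
        rw [hlen2] at hd
        calc ‖wpl B (js.drop (k + 1)) * C (js.get k) * wpl D (js.take k)‖
            ≤ ‖wpl B (js.drop (k + 1))‖ * ‖C (js.get k)‖ * ‖wpl D (js.take k)‖ :=
              norm_mul3_le _ _ _
          _ ≤ (KB * r ^ (js.length - 1 - (k : ℕ))) * c * (KD * r ^ (k : ℕ)) := by
              apply mul_le_mul _ hd (norm_nonneg _) (by positivity)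
              apply mul_le_mul hb (hc _) (norm_nonneg _) (by positivity)
          _ = KB * c * KD * (r ^ (js.length - 1 - (k : ℕ)) * r ^ (k : ℕ)) := by ring
          _ = KB * c * KD * r ^ (js.length - 1) := by
              rw [← pow_add]
              congr 2
              omega
    _ = js.length * (KB * c * KD) * r ^ (js.length - 1) := by
        rw [Finset.sum_const, Finset.card_univ, Fintype.card_fin, nsmul_eq_mul]
        ring

end Part4

section Part5
set_option linter.unusedSectionVars false
variable {J : ℕ} {m : Type*} [Fintype m] [DecidableEq m]

lemma wp_conj {V W : Matrix m m ℝ} (hWV : W * V = 1) (hVW : V * W = 1)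
    (A : Fin J → Matrix m m ℝ) : ∀ {n : ℕ} (w : Fin n → Fin J),
    wp (fun j => V * A j * W) w = V * wp A w * W := by
  intro n
  induction n with
  | zero =>
    intro w
    rw [wp_zero, wp_zero, Matrix.mul_one, hVW]
  | succ n ih =>
    intro w
    rw [wp_succ, wp_succ, ih]
    have h2 : (V * A (w (Fin.last n)) * W) * (V * wp A (w ∘ Fin.castSucc) * W) =
        V * A (w (Fin.last n)) * (W * V) * (wp A (w ∘ Fin.castSucc) * W) := by
      noncomm_ring
    rw [h2, hWV, Matrix.mul_one]
    noncomm_ring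

lemma wp_reindex {α : Type*} [Fintype α] [DecidableEq α] (e : α ≃ m)
    (A : Fin J → Matrix α α ℝ) : ∀ {n : ℕ} (w : Fin n → Fin J),
    wp (fun j => Matrix.reindex e e (A j)) w = Matrix.reindex e e (wp A w) := by
  intro n
  induction n with
  | zero =>
    intro w
    rw [wp_zero, wp_zero, Matrix.reindex_apply, Matrix.submatrix_one_equiv]
  | succ n ih =>
    intro w
    rw [wp_succ, wp_succ, ih, Matrix.reindex_apply, Matrix.reindex_apply,
      Matrix.reindex_apply, Matrix.submatrix_mul_equiv]

end Part5

end JsrAux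

theorem JSR_eq_JSRg {s J : ℕ} (hJ : 1 ≤ J) (A : Fin J → Matrix (Fin s) (Fin s) ℝ) :
    JSR A = JsrAux.JSRg A := by
  haveI : Nonempty (Fin J) := ⟨⟨0, hJ⟩⟩
  have key : ∀ n : {k : ℕ // 1 ≤ k},
      (⨆ w : Fin (n : ℕ) → Fin J, l2OpNorm (wordProd A w) ^ (1 / ((n : ℕ) : ℝ))) =
      (JsrAux.Fn A (n : ℕ)) ^ (1 / ((n : ℕ) : ℝ)) := by
    intro n
    have h := JsrAux.ciSup_rpow (f := fun w : Fin (n : ℕ) → Fin J => l2OpNorm (wordProd A w))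
      (fun w => norm_nonneg _) (c := 1 / ((n : ℕ) : ℝ)) (by positivity)
    rw [h]
    rfl
  rw [JSR, JsrAux.JSRg]
  exact congrArg _ (funext key)

open JsrAux in
/-- For a simultaneously block upper triangularisable family, the JSR is the
maximum of the JSRs of the diagonal blocks. -/
theorem jsr_of_block_triangular {s₁ s₂ J : ℕ} (hJ : 1 ≤ J)
    (A : Fin J → Matrix (Fin (s₁ + s₂)) (Fin (s₁ + s₂)) ℝ)
    (V : Matrix (Fin (s₁ + s₂)) (Fin (s₁ + s₂)) ℝ) (hV : IsUnit V)
    (B : Fin J → Matrix (Fin s₁) (Fin s₁) ℝ)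
    (C : Fin J → Matrix (Fin s₁) (Fin s₂) ℝ)
    (D : Fin J → Matrix (Fin s₂) (Fin s₂) ℝ)
    (h : ∀ j, V * A j * V⁻¹ =
      Matrix.reindex finSumFinEquiv finSumFinEquiv
        (Matrix.fromBlocks (B j) (C j) 0 (D j))) :
    JSR A = max (JSR B) (JSR D) := by
  haveI : Nonempty (Fin J) := ⟨⟨0, hJ⟩⟩
  set e := (finSumFinEquiv : Fin s₁ ⊕ Fin s₂ ≃ Fin (s₁ + s₂))
  set M : Fin J → Matrix (Fin s₁ ⊕ Fin s₂) (Fin s₁ ⊕ Fin s₂) ℝ :=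
    fun j => Matrix.fromBlocks (B j) (C j) 0 (D j) with hM
  have hdet : IsUnit V.det := (Matrix.isUnit_iff_isUnit_det V).mp hV
  have hVV : V * V⁻¹ = 1 := Matrix.mul_nonsing_inv V hdet
  have hV'V : V⁻¹ * V = 1 := Matrix.nonsing_inv_mul V hdet
  -- word products of A vs M
  have hwpA' : ∀ {n : ℕ} (w : Fin n → Fin J),
      wp (fun j => V * A j * V⁻¹) w = Matrix.reindex e e (wp M w) := by
    intro n w
    have h1 : (fun j => V * A j * V⁻¹) = fun j => Matrix.reindex e e (M j) := by
      funext j; exact h j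
    rw [h1, wp_reindex]
  have hwpA : ∀ {n : ℕ} (w : Fin n → Fin J),
      wp A w = V⁻¹ * Matrix.reindex e e (wp M w) * V := by
    intro n w
    have h1 : A = fun j => V⁻¹ * (V * A j * V⁻¹) * V := by
      funext j
      have : V⁻¹ * (V * A j * V⁻¹) * V = (V⁻¹ * V) * A j * (V⁻¹ * V) := by noncomm_ring
      rw [this, hV'V, Matrix.one_mul, Matrix.mul_one]
    conv_lhs => rw [h1]
    rw [wp_conj hVV hV'V, hwpA']
  have hwpM : ∀ {n : ℕ} (w : Fin n → Fin J),
      Matrix.reindex e e (wp M w) = V * wp A w * V⁻¹ := by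
    intro n w
    rw [← hwpA']
    have h1 : (fun j => V * A j * V⁻¹) = fun j => V * A j * V⁻¹ := rfl
    exact wp_conj hV'V hVV A w
  -- norm comparisons
  set KV : ℝ := max 1 (‖V‖ * ‖V⁻¹‖) with hKV
  have hKV1 : 1 ≤ KV := le_max_left _ _
  have compAM : ∀ n : ℕ, Fn A n ≤ KV * Fn M n := by
    intro n
    refine Fn_le hJ A fun w => ?_
    calc ‖wp A w‖ = ‖V⁻¹ * Matrix.reindex e e (wp M w) * V‖ := by rw [hwpA w]
      _ ≤ ‖V⁻¹‖ * ‖Matrix.reindex e e (wp M w)‖ * ‖V‖ := norm_mul3_le _ _ _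
      _ = (‖V‖ * ‖V⁻¹‖) * ‖wp M w‖ := by rw [norm_reindex]; ring
      _ ≤ KV * Fn M n := by
          apply mul_le_mul (le_max_right _ _) (norm_wp_le_Fn M w) (norm_nonneg _)
            (by linarith)
  have compMA : ∀ n : ℕ, Fn M n ≤ KV * Fn A n := by
    intro n
    refine Fn_le hJ M fun w => ?_
    calc ‖wp M w‖ = ‖Matrix.reindex e e (wp M w)‖ := (norm_reindex e (wp M w)).symm
      _ = ‖V * wp A w * V⁻¹‖ := by rw [hwpM w]
      _ ≤ ‖V‖ * ‖wp A w‖ * ‖V⁻¹‖ := norm_mul3_le _ _ _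
      _ = (‖V‖ * ‖V⁻¹‖) * ‖wp A w‖ := by ring
      _ ≤ KV * Fn A n := by
          apply mul_le_mul (le_max_right _ _) (norm_wp_le_Fn A w) (norm_nonneg _)
            (by linarith)
  -- block structure of wp M
  have hblock : ∀ {n : ℕ} (w : Fin n → Fin J),
      wp M w = Matrix.fromBlocks (wp B w) (offd B C D (List.ofFn w)) 0 (wp D w) := by
    intro n w
    rw [← wpl_ofFn M w, hM, wpl_fromBlocks, wpl_ofFn, wpl_ofFn]
  -- lower bound : max ≤ JSRg A
  have lowB : JSRg B ≤ JSRg A := by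
    refine jsrg_le_jsrg hJ hKV1 fun n hn => ?_
    have h1 : Fn B n ≤ Fn M n := by
      refine Fn_le hJ B fun w => ?_
      calc ‖wp B w‖ ≤ ‖wp M w‖ := by
            rw [hblock w]
            exact norm_blockL_le _ _ _ _
        _ ≤ Fn M n := norm_wp_le_Fn M w
    exact h1.trans (compMA n)
  have lowD : JSRg D ≤ JSRg A := by
    refine jsrg_le_jsrg hJ hKV1 fun n hn => ?_
    have h1 : Fn D n ≤ Fn M n := by
      refine Fn_le hJ D fun w => ?_
      calc ‖wp D w‖ ≤ ‖wp M w‖ := by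
            rw [hblock w]
            exact norm_blockR_le _ _ _ _
        _ ≤ Fn M n := norm_wp_le_Fn M w
    exact h1.trans (compMA n)
  -- upper bound : JSRg A ≤ max
  set cC : ℝ := ⨆ j : Fin J, ‖C j‖ with hcC
  have hc : ∀ j, ‖C j‖ ≤ cC := fun j => by
    rw [hcC]
    exact le_ciSup (Set.Finite.bddAbove (Set.finite_range fun j => ‖C j‖)) j
  have hc0 : 0 ≤ cC := (norm_nonneg _).trans (hc ⟨0, hJ⟩)
  have upA : JSRg A ≤ max (JSRg B) (JSRg D) := by
    refine le_of_forall_gt' fun r hr => ?_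
    have hrB : JSRg B < r := lt_of_le_of_lt (le_max_left _ _) hr
    have hrD : JSRg D < r := lt_of_le_of_lt (le_max_right _ _) hr
    have hr0 : 0 < r := lt_of_le_of_lt (JSRg_nonneg hJ B) hrB
    obtain ⟨KB, hKB1, hgB⟩ := exists_geom hJ B hrB
    obtain ⟨KD, hKD1, hgD⟩ := exists_geom hJ D hrD
    set Q : ℝ := KB * cC * KD with hQ
    have hQ0 : 0 ≤ Q := by positivity
    set S : ℝ := Q / r with hS
    have hS0 : 0 ≤ S := by positivity
    set KK : ℝ := KV * (KB + KD + S) with hKK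
    have hKK0 : 0 < KK := by
      have : (0:ℝ) < KB + KD + S := by nlinarith
      nlinarith
    refine jsrg_le_of_poly hJ A hKK0 hr0 fun n hn => ?_
    have hMn : Fn M n ≤ KB * r ^ n + n * Q * r ^ (n - 1) + KD * r ^ n := by
      refine Fn_le hJ M fun w => ?_
      rw [hblock w]
      have hb : ‖wp B w‖ ≤ KB * r ^ n := by
        rw [← wpl_ofFn B w]
        have := norm_wpl_le_geom B hKB1 hr0 hgB (List.ofFn w)
        rwa [List.length_ofFn] at this
      have hd : ‖wp D w‖ ≤ KD * r ^ n := by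
        rw [← wpl_ofFn D w]
        have := norm_wpl_le_geom D hKD1 hr0 hgD (List.ofFn w)
        rwa [List.length_ofFn] at this
      have hx : ‖offd B C D (List.ofFn w)‖ ≤ n * Q * r ^ (n - 1) := by
        have := norm_offd_le B C D hJ hc hc0 hKB1 hKD1 hr0 hgB hgD (List.ofFn w)
        rwa [List.length_ofFn] at this
      calc ‖Matrix.fromBlocks (wp B w) (offd B C D (List.ofFn w)) 0 (wp D w)‖
          ≤ ‖wp B w‖ + ‖offd B C D (List.ofFn w)‖ + ‖wp D w‖ := norm_fromBlocks_le _ _ _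
        _ ≤ KB * r ^ n + n * Q * r ^ (n - 1) + KD * r ^ n := by linarith
    have hrn : r ^ n = r ^ (n - 1) * r := by
      rw [← pow_succ]
      congr 1
      omega
    have e1 : (n : ℝ) * Q * r ^ (n - 1) = S * n * r ^ n := by
      rw [hS, hrn]
      field_simp
    have h2 : KB * r ^ n + n * Q * r ^ (n - 1) + KD * r ^ n ≤ (KB + KD + S) * (n + 1) * r ^ n := by
      rw [e1]
      have hx : (0:ℝ) ≤ r ^ n := by positivity
      have hn1 : (1:ℝ) ≤ (n:ℝ) := by exact_mod_cast hn
      nlinarith [mul_nonneg (mul_nonneg (by linarith : (0:ℝ) ≤ KB + KD)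
        (by linarith : (0:ℝ) ≤ (n:ℝ))) hx, mul_nonneg hS0 hx]
    calc Fn A n ≤ KV * Fn M n := compAM n
      _ ≤ KV * ((KB + KD + S) * (n + 1) * r ^ n) := by
          apply mul_le_mul_of_nonneg_left _ (by linarith)
          exact hMn.trans h2
      _ = KK * (n + 1) * r ^ n := by rw [hKK]; ring
  -- combine
  rw [JSR_eq_JSRg hJ A, JSR_eq_JSRg hJ B, JSR_eq_JSRg hJ D]
  exact le_antisymm upA (max_le lowB lowD)
end
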